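/- arXiv:0903.0834 — 3 statements merged into one kernel-verified Lean document; each statement's English description precedes it below -/
import Mathlib

section
/- Let A be a Banach ternary algebra and X a ternary Banach A-module, and let 𝕋¹ = {λ ∈ ℂ : |λ| = 1}. Suppose f : A → X is a mapping with f(0) = 0, g, h, k : A → A are mappings with g(0) = h(0) = k(0) = 0, and φ : A×A×A×A×A → [0,∞) is a function such that φ̃(x,y,u,v,w) := (1/2) Σ_{n=0}^∞ φ(2ⁿx, 2ⁿy, 2ⁿu, 2ⁿv, 2ⁿw) < ∞ for all x,y,u,v,w ∈ A, and such that for all λ ∈ 𝕋¹ and all x,y,u,v,w ∈ A: ‖f(λx + λy + [uvw]_A) − λf(x) − λf(y) − [[f(u)vw]_X]_{(g,h,k)} + [[f(v)uw]_X]_{(g,h,k)} + [[f(w)vu]_X]_{(g,h,k)}‖ ≤ φ(x,y,u,v,w), ‖g(λx+λy) − λg(x) − λg(y)‖ ≤ φ(x,y,0,0,0), ‖h(λx+λy) − λh(x) − λh(y)‖ ≤ φ(x,y,0,0,0), and ‖k(λx+λy) − λk(x) − λk(y)‖ ≤ φ(x,y,0,0,0). Then there exist unique ℂ-linear mappings σ,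 τ, ξ : A → A with ‖g(x) − σ(x)‖ ≤ φ̃(x,x,0,0,0), ‖h(x) − τ(x)‖ ≤ φ̃(x,x,0,0,0), ‖k(x) − ξ(x)‖ ≤ φ̃(x,x,0,0,0) for all x ∈ A, and there exists a unique ℂ-linear mapping D : A → X with ‖f(x) − D(x)‖ ≤ φ̃(x,x,0,0,0) for all x ∈ A which satisfies the Lie ternary (σ,τ,ξ)-derivation identity D([uvw]_A) = [[D(u)vw]_X]_{(σ,τ,ξ)} − [[D(v)uw]_X]_{(σ,τ,ξ)} − [[D(w)vu]_X]_{(σ,τ,ξ)} for all u,v,w ∈ A. Moreover D(x) = lim_{n→∞} f(2ⁿx)/2ⁿ, σ(x) = lim_{n→∞} g(2ⁿx)/2ⁿ, τ(x) = lim_{n→∞} h(2ⁿx)/2ⁿ, ξ(x) = lim_{n→∞} k(2ⁿx)/2ⁿ. -/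
open Filter Topology

theorem linmap_real_smul {E F : Type*} [NormedAddCommGroup E] [NormedSpace ℂ E]
    [NormedAddCommGroup F] [NormedSpace ℂ F]
    {f : E → F} (hf : IsLinearMap ℂ f) (r : ℝ) (x : E) : f (r • x) = r • f x := by
  have h1 : (r : ℂ) • x = r • x := Complex.coe_smul r x
  have h2 : (r : ℂ) • f x = r • f x := Complex.coe_smul r (f x)
  rw [← h1, hf.map_smul, h2]

theorem tri_tendsto {E F G H : Type*} [NormedAddCommGroup E] [NormedSpace ℂ E]
    [NormedAddCommGroup F] [NormedSpace ℂ F] [NormedAddCommGroup G] [NormedSpace ℂ G]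
    [NormedAddCommGroup H] [NormedSpace ℂ H]
    (m : E → F → G → H)
    (h1 : ∀ b c, IsLinearMap ℂ fun a => m a b c)
    (h2 : ∀ a c, IsLinearMap ℂ fun b => m a b c)
    (h3 : ∀ a b, IsLinearMap ℂ fun c => m a b c)
    (hb : ∀ a b c, ‖m a b c‖ ≤ ‖a‖ * ‖b‖ * ‖c‖)
    {an : ℕ → E} {bn : ℕ → F} {cn : ℕ → G} {a : E} {b : F} {c : G}
    (ha : Tendsto an atTop (𝓝 a)) (hbt : Tendsto bn atTop (𝓝 b))
    (hct : Tendsto cn atTop (𝓝 c)) :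
    Tendsto (fun n => m (an n) (bn n) (cn n)) atTop (𝓝 (m a b c)) := by
  rw [tendsto_iff_norm_sub_tendsto_zero]
  have hdec : ∀ n, m (an n) (bn n) (cn n) - m a b c
      = m (an n - a) (bn n) (cn n) + m a (bn n - b) (cn n) + m a b (cn n - c) := by
    intro n
    have e1 : m (an n - a) (bn n) (cn n) = m (an n) (bn n) (cn n) - m a (bn n) (cn n) :=
      (h1 (bn n) (cn n)).mk' _ |>.map_sub _ _
    have e2 : m a (bn n - b) (cn n) = m a (bn n) (cn n) - m a b (cn n) :=
      (h2 a (cn n)).mk' _ |>.map_sub _ _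
    have e3 : m a b (cn n - c) = m a b (cn n) - m a b c :=
      (h3 a b).mk' _ |>.map_sub _ _
    rw [e1, e2, e3]; abel
  have l1 : Tendsto (fun n => ‖an n - a‖) atTop (𝓝 0) :=
    tendsto_iff_norm_sub_tendsto_zero.mp ha
  have l2 : Tendsto (fun n => ‖bn n - b‖) atTop (𝓝 0) :=
    tendsto_iff_norm_sub_tendsto_zero.mp hbt
  have l3 : Tendsto (fun n => ‖cn n - c‖) atTop (𝓝 0) :=
    tendsto_iff_norm_sub_tendsto_zero.mp hct
  apply squeeze_zero (g := fun n => ‖an n - a‖ * ‖bn n‖ * ‖cn n‖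
      + ‖a‖ * ‖bn n - b‖ * ‖cn n‖ + ‖a‖ * ‖b‖ * ‖cn n - c‖) (fun n => norm_nonneg _)
  · intro n
    rw [hdec n]
    calc ‖m (an n - a) (bn n) (cn n) + m a (bn n - b) (cn n) + m a b (cn n - c)‖
        ≤ ‖m (an n - a) (bn n) (cn n) + m a (bn n - b) (cn n)‖ + ‖m a b (cn n - c)‖ :=
          norm_add_le _ _
      _ ≤ ‖m (an n - a) (bn n) (cn n)‖ + ‖m a (bn n - b) (cn n)‖ + ‖m a b (cn n - c)‖ := by
          gcongr; exact norm_add_le _ _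
      _ ≤ ‖an n - a‖ * ‖bn n‖ * ‖cn n‖ + ‖a‖ * ‖bn n - b‖ * ‖cn n‖
            + ‖a‖ * ‖b‖ * ‖cn n - c‖ := by
          exact add_le_add (add_le_add (hb _ _ _) (hb _ _ _)) (hb _ _ _)
  · have T := (((l1.mul hbt.norm).mul hct.norm).add
      (((tendsto_const_nhds (x := ‖a‖)).mul l2).mul hct.norm)).add
      (((tendsto_const_nhds (x := ‖a‖)).mul (tendsto_const_nhds (x := ‖b‖))).mul l3)
    rw [show (0:ℝ) = 0 * ‖b‖ * ‖c‖ + ‖a‖ * 0 * ‖c‖ + ‖a‖ * ‖b‖ * 0 by ring]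
    exact T

theorem gen_stab {A B : Type*}
    [NormedAddCommGroup A] [NormedSpace ℂ A]
    [NormedAddCommGroup B] [NormedSpace ℂ B] [CompleteSpace B]
    (F : A → B) (hF0 : F 0 = 0)
    (ψ : A → A → ℝ) (hψ0 : ∀ x y, 0 ≤ ψ x y)
    (hsum : ∀ x y : A, Summable fun n : ℕ => ψ ((2 ^ n : ℝ) • x) ((2 ^ n : ℝ) • y))
    (hineq : ∀ lam : ℂ, ‖lam‖ = 1 → ∀ x y : A,
      ‖F (lam • x + lam • y) - lam • F x - lam • F y‖ ≤ ψ x y) :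
    ∃ L : A →ₗ[ℂ] B,
      (∀ x, Tendsto (fun n : ℕ => ((2 : ℝ) ^ n)⁻¹ • F ((2 ^ n : ℝ) • x)) atTop (𝓝 (L x))) ∧
      (∀ x, ‖F x - L x‖ ≤ (1 / 2) * ∑' n : ℕ, ψ ((2 ^ n : ℝ) • x) ((2 ^ n : ℝ) • x)) ∧
      (∀ L' : A →ₗ[ℂ] B, (∀ x, ‖F x - L' x‖ ≤
          (1 / 2) * ∑' n : ℕ, ψ ((2 ^ n : ℝ) • x) ((2 ^ n : ℝ) • x)) → L' = L) := by
  have key : ∀ y : A, ‖F (y + y) - F y - F y‖ ≤ ψ y y := fun y => by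
    simpa using hineq 1 (by simp) y y
  have step : ∀ (x : A) (n : ℕ),
      dist (((2:ℝ)^n)⁻¹ • F ((2^n:ℝ) • x)) (((2:ℝ)^(n+1))⁻¹ • F ((2^(n+1):ℝ) • x))
        ≤ (1/2) * ψ ((2^n:ℝ) • x) ((2^n:ℝ) • x) := by
    intro x n
    set y := (2^n:ℝ) • x with hy
    have hxy : ((2:ℝ)^(n+1)) • x = y + y := by rw [hy, ← add_smul]; congr 1; ring
    have e1 : ((2:ℝ)^n)⁻¹ • F y = ((2:ℝ)^(n+1))⁻¹ • ((2:ℝ) • F y) := by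
      rw [smul_smul]; congr 1
      rw [pow_succ]
      field_simp
    rw [dist_eq_norm, e1, hxy, ← smul_sub, norm_smul, Real.norm_eq_abs,
      abs_of_pos (by positivity)]
    have h2 : ‖(2:ℝ) • F y - F (y + y)‖ ≤ ψ y y := by
      calc ‖(2:ℝ) • F y - F (y+y)‖ = ‖F (y+y) - F y - F y‖ := by
            rw [← norm_neg]; congr 1; rw [two_smul]; abel
        _ ≤ ψ y y := key y
    have h3 : ((2:ℝ)^(n+1))⁻¹ ≤ 1/2 := by
      rw [pow_succ, mul_inv]
      have : ((2:ℝ)^n)⁻¹ ≤ 1 := by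
        rw [inv_le_one_iff₀]; right; exact one_le_pow₀ (by norm_num)
      nlinarith [inv_nonneg.mpr (le_of_lt (pow_pos (by norm_num : (0:ℝ) < 2) n))]
    exact mul_le_mul h3 h2 (norm_nonneg _) (by norm_num)
  have hconv : ∀ x : A, ∃ b : B,
      Tendsto (fun n : ℕ => ((2:ℝ)^n)⁻¹ • F ((2^n:ℝ) • x)) atTop (𝓝 b) := by
    intro x
    exact cauchySeq_tendsto_of_complete
      (cauchySeq_of_dist_le_of_summable _ (step x) ((hsum x x).mul_left (1/2)))
  choose L0 hL using hconv
  have bound0 : ∀ x, ‖F x - L0 x‖ ≤ (1/2) * ∑' n : ℕ, ψ ((2^n:ℝ)•x) ((2^n:ℝ)•x) := by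
    intro x
    have h := dist_le_tsum_of_dist_le_of_tendsto₀ _ (step x) ((hsum x x).mul_left (1/2)) (hL x)
    rw [dist_eq_norm] at h
    simp only [pow_zero, inv_one, one_smul] at h
    calc ‖F x - L0 x‖ ≤ ∑' n : ℕ, (1/2) * ψ ((2^n:ℝ)•x) ((2^n:ℝ)•x) := h
      _ = (1/2) * ∑' n : ℕ, ψ ((2^n:ℝ)•x) ((2^n:ℝ)•x) := tsum_mul_left
  have main : ∀ lam : ℂ, ‖lam‖ = 1 → ∀ x y : A,
      L0 (lam•x + lam•y) = lam • L0 x + lam • L0 y := by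
    intro lam hlam x y
    have h1 : Tendsto (fun n : ℕ => ((2:ℝ)^n)⁻¹ • F ((2^n:ℝ) • (lam•x+lam•y))
        - lam • (((2:ℝ)^n)⁻¹ • F ((2^n:ℝ) • x)) - lam • (((2:ℝ)^n)⁻¹ • F ((2^n:ℝ) • y)))
        atTop (𝓝 (L0 (lam•x+lam•y) - lam • L0 x - lam • L0 y)) :=
      ((hL _).sub ((hL x).const_smul lam)).sub ((hL y).const_smul lam)
    have h2 : Tendsto (fun n : ℕ => ((2:ℝ)^n)⁻¹ • F ((2^n:ℝ) • (lam•x+lam•y))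
        - lam • (((2:ℝ)^n)⁻¹ • F ((2^n:ℝ) • x)) - lam • (((2:ℝ)^n)⁻¹ • F ((2^n:ℝ) • y)))
        atTop (𝓝 0) := by
      apply squeeze_zero_norm (a := fun n : ℕ => ψ ((2^n:ℝ)•x) ((2^n:ℝ)•y))
      · intro n
        have earg : (2^n:ℝ) • (lam•x + lam•y) = lam•((2^n:ℝ)•x) + lam•((2^n:ℝ)•y) := by
          rw [smul_add, smul_comm ((2:ℝ)^n) lam x, smul_comm ((2:ℝ)^n) lam y]
        have e : ((2:ℝ)^n)⁻¹ • F ((2^n:ℝ) • (lam•x+lam•y))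
            - lam • (((2:ℝ)^n)⁻¹ • F ((2^n:ℝ) • x)) - lam • (((2:ℝ)^n)⁻¹ • F ((2^n:ℝ) • y))
            = ((2:ℝ)^n)⁻¹ • (F (lam•((2^n:ℝ)•x) + lam•((2^n:ℝ)•y))
              - lam • F ((2^n:ℝ)•x) - lam • F ((2^n:ℝ)•y)) := by
          rw [smul_sub, smul_sub, earg,
            smul_comm (((2:ℝ)^n)⁻¹) lam (F ((2^n:ℝ)•x)),
            smul_comm (((2:ℝ)^n)⁻¹) lam (F ((2^n:ℝ)•y))]
        rw [e, norm_smul, Real.norm_eq_abs, abs_of_pos (by positivity)]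
        have hle : ((2:ℝ)^n)⁻¹ ≤ 1 := by
          rw [inv_le_one_iff₀]; right; exact one_le_pow₀ (by norm_num)
        calc ((2:ℝ)^n)⁻¹ * ‖F (lam•((2^n:ℝ)•x) + lam•((2^n:ℝ)•y))
              - lam • F ((2^n:ℝ)•x) - lam • F ((2^n:ℝ)•y)‖
            ≤ 1 * ψ ((2^n:ℝ)•x) ((2^n:ℝ)•y) :=
              mul_le_mul hle (hineq lam hlam _ _) (norm_nonneg _) (by norm_num)
          _ = ψ ((2^n:ℝ)•x) ((2^n:ℝ)•y) := one_mul _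
      · exact (hsum x y).tendsto_atTop_zero
    have h3 := tendsto_nhds_unique h1 h2
    exact sub_eq_zero.mp (by rw [sub_add_eq_sub_sub]; exact h3)
  have hzero : L0 0 = 0 := by
    have h0 : (fun n : ℕ => ((2:ℝ)^n)⁻¹ • F ((2^n:ℝ) • (0:A))) = fun _ => (0:B) := by
      funext n; simp [hF0]
    exact tendsto_nhds_unique (hL 0) (h0 ▸ tendsto_const_nhds)
  have hadd : ∀ x y, L0 (x + y) = L0 x + L0 y := fun x y => by
    simpa using main 1 (by simp) x y
  have hunit : ∀ lam : ℂ, ‖lam‖ = 1 → ∀ x, L0 (lam•x) = lam • L0 x := by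
    intro lam hl x
    simpa [hzero] using main lam hl x 0
  have hnat : ∀ (n : ℕ) (x : A), L0 ((n:ℂ)•x) = (n:ℂ) • L0 x := by
    intro n x
    induction n with
    | zero => simp [hzero]
    | succ m ih => simp [Nat.cast_succ, add_smul, one_smul, hadd, ih]
  have hreal2 : ∀ t : ℝ, |t| ≤ 2 → ∀ x, L0 ((t:ℂ)•x) = (t:ℂ) • L0 x := by
    intro t ht x
    have hs : (t/2)^2 ≤ 1 := by nlinarith [sq_abs t, abs_nonneg t]
    set lam : ℂ := ⟨t/2, Real.sqrt (1 - (t/2)^2)⟩ with hlam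
    have him : lam.im^2 = 1 - (t/2)^2 := Real.sq_sqrt (by linarith)
    have habs : ‖lam‖ = 1 := by
      rw [Complex.norm_def, Complex.normSq_apply]
      have hre : lam.re = t/2 := rfl
      have : lam.re * lam.re + lam.im * lam.im = 1 := by
        rw [hre]; nlinarith [him]
      rw [this, Real.sqrt_one]
    have hconj : ‖starRingEnd ℂ lam‖ = 1 := by rw [Complex.norm_conj]; exact habs
    have hsum2 : (t:ℂ) = lam + starRingEnd ℂ lam := by
      rw [Complex.add_conj]
      have hre : lam.re = t/2 := rfl
      rw [hre]
      push_cast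
      ring
    rw [hsum2, add_smul, hadd, hunit lam habs, hunit _ hconj, ← add_smul, ← hsum2]
  have hreal : ∀ (t : ℝ) (x : A), L0 ((t:ℂ)•x) = (t:ℂ) • L0 x := by
    intro t x
    set n : ℕ := ⌈|t|⌉₊ + 1 with hn
    have hn0 : (0:ℝ) < n := by positivity
    have hnc : ((n:ℝ):ℂ) ≠ 0 := by exact_mod_cast ne_of_gt hn0
    have h2 : |t/n| ≤ 2 := by
      rw [abs_div, abs_of_pos hn0, div_le_iff₀ hn0]
      have hle : |t| ≤ (n:ℝ) := le_trans (Nat.le_ceil _) (by exact_mod_cast Nat.le_succ _)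
      nlinarith
    have key3 : (t:ℂ) = ((n:ℕ):ℂ) * (((t/n : ℝ)):ℂ) := by
      have hnc' : ((n:ℕ):ℂ) ≠ 0 := Nat.cast_ne_zero.mpr (by omega)
      have hcast : (((t/(n:ℝ) : ℝ)):ℂ) = (t:ℂ) / ((n:ℕ):ℂ) := by push_cast; ring
      rw [hcast, mul_comm, div_mul_cancel₀ _ hnc']
    rw [key3, mul_smul, hnat, hreal2 _ h2, ← mul_smul, ← key3]
  have hsmulC : ∀ (c : ℂ) (x : A), L0 (c•x) = c • L0 x := by
    intro c x
    rcases eq_or_ne c 0 with hc | hc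
    · simp [hc, hzero]
    · have hr : (0:ℝ) < ‖c‖ := by
        exact (norm_pos_iff.mpr hc)
      have hu : ‖c / ((‖c‖ : ℝ):ℂ)‖ = 1 := by
        rw [norm_div, Complex.norm_real, norm_norm, div_self (ne_of_gt hr)]
      have hA : ((‖c‖ : ℝ):ℂ) ≠ 0 := Complex.ofReal_ne_zero.mpr (ne_of_gt hr)
      have hc2 : c = ((‖c‖ : ℝ):ℂ) * (c / ((‖c‖ : ℝ):ℂ)) := by
        rw [mul_comm, div_mul_cancel₀ _ hA]
      rw [hc2, mul_smul, hreal, hunit _ hu, ← mul_smul, ← hc2]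
  refine ⟨{ toFun := L0, map_add' := hadd, map_smul' := hsmulC }, hL, bound0, ?_⟩
  intro L' hL'
  ext x
  show L' x = L0 x
  have tails : Tendsto (fun n : ℕ => ∑' m : ℕ, ψ ((2^(m+n):ℝ)•x) ((2^(m+n):ℝ)•x))
      atTop (𝓝 0) := tendsto_sum_nat_add (fun j => ψ ((2^j:ℝ)•x) ((2^j:ℝ)•x))
  have hb : ∀ n : ℕ, ‖L' x - L0 x‖ ≤ ∑' m : ℕ, ψ ((2^(m+n):ℝ)•x) ((2^(m+n):ℝ)•x) := by
    intro n
    set y := (2^n:ℝ) • x with hy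
    have e1 : L' y = (2^n:ℝ) • L' x := by rw [hy]; exact L'.map_smul_of_tower _ _
    have e2 : L0 y = (2^n:ℝ) • L0 x := by
      rw [hy, ← Complex.coe_smul, hsmulC, Complex.coe_smul]
    have e3 : ‖L' x - L0 x‖ = ((2:ℝ)^n)⁻¹ * ‖L' y - L0 y‖ := by
      rw [e1, e2, ← smul_sub, norm_smul, Real.norm_eq_abs, abs_of_pos (by positivity),
        ← mul_assoc, inv_mul_cancel₀ (by positivity), one_mul]
    have htsum_eq : (∑' m : ℕ, ψ ((2^m:ℝ)•y) ((2^m:ℝ)•y))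
        = ∑' m : ℕ, ψ ((2^(m+n):ℝ)•x) ((2^(m+n):ℝ)•x) := by
      apply tsum_congr; intro m
      rw [hy, smul_smul, ← pow_add]
    have e4 : ‖L' y - L0 y‖ ≤ ∑' m : ℕ, ψ ((2^(m+n):ℝ)•x) ((2^(m+n):ℝ)•x) := by
      calc ‖L' y - L0 y‖ = ‖(F y - L0 y) - (F y - L' y)‖ := by congr 1; abel
        _ ≤ ‖F y - L0 y‖ + ‖F y - L' y‖ := norm_sub_le _ _
        _ ≤ (1/2) * (∑' m : ℕ, ψ ((2^m:ℝ)•y) ((2^m:ℝ)•y))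
            + (1/2) * (∑' m : ℕ, ψ ((2^m:ℝ)•y) ((2^m:ℝ)•y)) := add_le_add (bound0 y) (hL' y)
        _ = ∑' m : ℕ, ψ ((2^m:ℝ)•y) ((2^m:ℝ)•y) := by ring
        _ = _ := htsum_eq
    have hle : ((2:ℝ)^n)⁻¹ ≤ 1 := by
      rw [inv_le_one_iff₀]; right; exact one_le_pow₀ (by norm_num)
    have htn : (0:ℝ) ≤ ∑' m : ℕ, ψ ((2^(m+n):ℝ)•x) ((2^(m+n):ℝ)•x) :=
      tsum_nonneg (fun m => hψ0 _ _)
    rw [e3]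
    calc ((2:ℝ)^n)⁻¹ * ‖L' y - L0 y‖
        ≤ 1 * (∑' m : ℕ, ψ ((2^(m+n):ℝ)•x) ((2^(m+n):ℝ)•x)) :=
          mul_le_mul hle e4 (norm_nonneg _) (by norm_num)
      _ = _ := one_mul _
  have hfin : ‖L' x - L0 x‖ ≤ 0 := ge_of_tendsto' tails hb
  exact sub_eq_zero.mp (norm_le_zero_iff.mp hfin)


/-- The `(g,h,k)`-twisted bracket `[[x b c]_X]_{(g,h,k)} = [x h(b) k(c)]_X - [g(c) h(b) x]_X`,
where `mXAA` is the module product `X × A × A → X` and `mAAX` is the product `A × A × X → X`. -/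
def twistedBracket {A X : Type*} [SubtractionMonoid X]
    (mXAA : X → A → A → X) (mAAX : A → A → X → X)
    (g h k : A → A) (x : X) (b c : A) : X :=
  mXAA x (h b) (k c) - mAAX (g c) (h b) x

/-- Theorem 2.1: generalized Hyers–Ulam–Rassias stability of Lie ternary
`(σ,τ,ξ)`-derivations on Banach ternary algebras. -/
theorem stability_lie_ternary_derivation
    {A X : Type*}
    [NormedAddCommGroup A] [NormedSpace ℂ A] [CompleteSpace A]
    [NormedAddCommGroup X] [NormedSpace ℂ X] [CompleteSpace X]
    -- the ternary product of the Banach ternary algebra A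
    (tA : A → A → A → A)
    (htA1 : ∀ b c, IsLinearMap ℂ fun a => tA a b c)
    (htA2 : ∀ a c, IsLinearMap ℂ fun b => tA a b c)
    (htA3 : ∀ a b, IsLinearMap ℂ fun c => tA a b c)
    (htAassoc : ∀ a b c d e, tA (tA a b c) d e = tA a (tA b c d) e)
    (htAnorm : ∀ a b c, ‖tA a b c‖ ≤ ‖a‖ * ‖b‖ * ‖c‖)
    -- the ternary Banach A-module products on X
    (mXAA : X → A → A → X) (mAXA : A → X → A → X) (mAAX : A → A → X → X)
    (hm1 : ∀ a b, IsLinearMap ℂ fun x : X => mXAA x a b)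
    (hm2 : ∀ (x : X) b, IsLinearMap ℂ fun a => mXAA x a b)
    (hm3 : ∀ (x : X) a, IsLinearMap ℂ fun b => mXAA x a b)
    (hm4 : ∀ (x : X) b, IsLinearMap ℂ fun a => mAXA a x b)
    (hm5 : ∀ a b, IsLinearMap ℂ fun x : X => mAXA a x b)
    (hm6 : ∀ a (x : X), IsLinearMap ℂ fun b => mAXA a x b)
    (hm7 : ∀ b (x : X), IsLinearMap ℂ fun a => mAAX a b x)
    (hm8 : ∀ a (x : X), IsLinearMap ℂ fun b => mAAX a b x)
    (hm9 : ∀ a b, IsLinearMap ℂ fun x : X => mAAX a b x)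
    -- the mixed associativity identities
    (hx1 : ∀ a b c d (x : X), mAAX (tA a b c) d x = mAAX a (tA b c d) x)
    (hx1' : ∀ a b c d (x : X), mAAX a (tA b c d) x = mAAX a b (mAAX c d x))
    (hx2 : ∀ a b c d (x : X), mAXA (tA a b c) x d = mAXA a (mAAX b c x) d)
    (hx2' : ∀ a b c d (x : X), mAXA a (mAAX b c x) d = mAAX a b (mAXA c x d))
    (hx3 : ∀ a b c d (x : X), mXAA (mXAA x a b) c d = mXAA x (tA a b c) d)
    (hx3' : ∀ a b c d (x : X), mXAA x (tA a b c) d = mXAA x a (tA b c d))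
    (hx4 : ∀ a b c d (x : X), mXAA (mAXA a x b) c d = mAXA a (mXAA x b c) d)
    (hx4' : ∀ a b c d (x : X), mAXA a (mXAA x b c) d = mAXA a x (tA b c d))
    (hx5 : ∀ a b c d (x : X), mXAA (mAAX a b x) c d = mAXA a (mAXA b x c) d)
    (hx5' : ∀ a b c d (x : X), mAXA a (mAXA b x c) d = mAAX a b (mXAA x c d))
    -- the norm estimate for the module products
    (hmnorm : ∀ (x : X) a b,
      max (max ‖mXAA x a b‖ ‖mAXA a x b‖) ‖mAAX a b x‖ ≤ ‖a‖ * ‖b‖ * ‖x‖)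
    -- the data of the theorem
    (f : A → X) (g h k : A → A)
    (hf0 : f 0 = 0) (hg0 : g 0 = 0) (hh0 : h 0 = 0) (hk0 : k 0 = 0)
    (φ : A → A → A → A → A → ℝ)
    (hφnonneg : ∀ x y u v w, 0 ≤ φ x y u v w)
    (hφsum : ∀ x y u v w : A, Summable fun n : ℕ =>
      φ ((2 ^ n : ℝ) • x) ((2 ^ n : ℝ) • y) ((2 ^ n : ℝ) • u) ((2 ^ n : ℝ) • v) ((2 ^ n : ℝ) • w))
    (hfineq : ∀ lam : ℂ, ‖lam‖ = 1 → ∀ x y u v w : A,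
      ‖f (lam • x + lam • y + tA u v w) - lam • f x - lam • f y
          - twistedBracket mXAA mAAX g h k (f u) v w
          + twistedBracket mXAA mAAX g h k (f v) u w
          + twistedBracket mXAA mAAX g h k (f w) v u‖ ≤ φ x y u v w)
    (hgineq : ∀ lam : ℂ, ‖lam‖ = 1 → ∀ x y : A,
      ‖g (lam • x + lam • y) - lam • g x - lam • g y‖ ≤ φ x y 0 0 0)
    (hhineq : ∀ lam : ℂ, ‖lam‖ = 1 → ∀ x y : A,
      ‖h (lam • x + lam • y) - lam • h x - lam • h y‖ ≤ φ x y 0 0 0)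
    (hkineq : ∀ lam : ℂ, ‖lam‖ = 1 → ∀ x y : A,
      ‖k (lam • x + lam • y) - lam • k x - lam • k y‖ ≤ φ x y 0 0 0) :
    ∃ σ τ ξ : A →ₗ[ℂ] A, ∃ D : A →ₗ[ℂ] X,
      (∀ x : A, ‖g x - σ x‖ ≤
        (1 / 2) * ∑' n : ℕ, φ ((2 ^ n : ℝ) • x) ((2 ^ n : ℝ) • x) 0 0 0) ∧
      (∀ x : A, ‖h x - τ x‖ ≤
        (1 / 2) * ∑' n : ℕ, φ ((2 ^ n : ℝ) • x) ((2 ^ n : ℝ) • x) 0 0 0) ∧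
      (∀ x : A, ‖k x - ξ x‖ ≤
        (1 / 2) * ∑' n : ℕ, φ ((2 ^ n : ℝ) • x) ((2 ^ n : ℝ) • x) 0 0 0) ∧
      (∀ x : A, ‖f x - D x‖ ≤
        (1 / 2) * ∑' n : ℕ, φ ((2 ^ n : ℝ) • x) ((2 ^ n : ℝ) • x) 0 0 0) ∧
      -- D is a Lie ternary (σ,τ,ξ)-derivation
      (∀ u v w : A, D (tA u v w) =
          twistedBracket mXAA mAAX (⇑σ) (⇑τ) (⇑ξ) (D u) v w
          - twistedBracket mXAA mAAX (⇑σ) (⇑τ) (⇑ξ) (D v) u w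
          - twistedBracket mXAA mAAX (⇑σ) (⇑τ) (⇑ξ) (D w) v u) ∧
      -- the limit formulas
      (∀ x : A, Tendsto (fun n : ℕ => ((2 : ℝ) ^ n)⁻¹ • f ((2 ^ n : ℝ) • x))
        atTop (𝓝 (D x))) ∧
      (∀ x : A, Tendsto (fun n : ℕ => ((2 : ℝ) ^ n)⁻¹ • g ((2 ^ n : ℝ) • x))
        atTop (𝓝 (σ x))) ∧
      (∀ x : A, Tendsto (fun n : ℕ => ((2 : ℝ) ^ n)⁻¹ • h ((2 ^ n : ℝ) • x))
        atTop (𝓝 (τ x))) ∧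
      (∀ x : A, Tendsto (fun n : ℕ => ((2 : ℝ) ^ n)⁻¹ • k ((2 ^ n : ℝ) • x))
        atTop (𝓝 (ξ x))) ∧
      -- uniqueness
      (∀ σ' : A →ₗ[ℂ] A, (∀ x : A, ‖g x - σ' x‖ ≤
        (1 / 2) * ∑' n : ℕ, φ ((2 ^ n : ℝ) • x) ((2 ^ n : ℝ) • x) 0 0 0) → σ' = σ) ∧
      (∀ τ' : A →ₗ[ℂ] A, (∀ x : A, ‖h x - τ' x‖ ≤
        (1 / 2) * ∑' n : ℕ, φ ((2 ^ n : ℝ) • x) ((2 ^ n : ℝ) • x) 0 0 0) → τ' = τ) ∧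
      (∀ ξ' : A →ₗ[ℂ] A, (∀ x : A, ‖k x - ξ' x‖ ≤
        (1 / 2) * ∑' n : ℕ, φ ((2 ^ n : ℝ) • x) ((2 ^ n : ℝ) • x) 0 0 0) → ξ' = ξ) ∧
      (∀ D' : A →ₗ[ℂ] X, (∀ x : A, ‖f x - D' x‖ ≤
        (1 / 2) * ∑' n : ℕ, φ ((2 ^ n : ℝ) • x) ((2 ^ n : ℝ) • x) 0 0 0) → D' = D) := by
    classical
  have hψsum : ∀ x y : A, Summable fun n : ℕ =>
      φ ((2^n:ℝ) • x) ((2^n:ℝ) • y) 0 0 0 := by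
    intro x y
    simpa using hφsum x y 0 0 0
  have hm1z : ∀ a b : A, mXAA (0:X) a b = 0 := fun a b => (hm1 a b).map_zero
  have hm9z : ∀ a b : A, mAAX a b (0:X) = 0 := fun a b => (hm9 a b).map_zero
  have hf' : ∀ lam : ℂ, ‖lam‖ = 1 → ∀ x y : A,
      ‖f (lam • x + lam • y) - lam • f x - lam • f y‖ ≤ φ x y 0 0 0 := by
    intro lam hl x y
    have ht0 : tA 0 0 0 = (0:A) := (htA1 0 0).map_zero
    have htb : twistedBracket mXAA mAAX g h k (f 0) 0 0 = (0:X) := by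
      simp only [twistedBracket, hf0]
      rw [hm1z, hm9z, sub_zero]
    have hq := hfineq lam hl x y 0 0 0
    rw [ht0, htb] at hq
    simpa using hq
  obtain ⟨σ, hσt, hσb, hσu⟩ := gen_stab g hg0 (fun x y => φ x y 0 0 0)
    (fun x y => hφnonneg x y 0 0 0) hψsum hgineq
  obtain ⟨τ, hτt, hτb, hτu⟩ := gen_stab h hh0 (fun x y => φ x y 0 0 0)
    (fun x y => hφnonneg x y 0 0 0) hψsum hhineq
  obtain ⟨ξ, hξt, hξb, hξu⟩ := gen_stab k hk0 (fun x y => φ x y 0 0 0)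
    (fun x y => hφnonneg x y 0 0 0) hψsum hkineq
  obtain ⟨D, hDt, hDb, hDu⟩ := gen_stab f hf0 (fun x y => φ x y 0 0 0)
    (fun x y => hφnonneg x y 0 0 0) hψsum hf'
  have m1s : ∀ (r:ℝ) (x:X) a b, mXAA (r•x) a b = r • mXAA x a b :=
    fun r x a b => linmap_real_smul (hm1 a b) r x
  have m2s : ∀ (r:ℝ) (x:X) a b, mXAA x (r•a) b = r • mXAA x a b :=
    fun r x a b => linmap_real_smul (hm2 x b) r a
  have m3s : ∀ (r:ℝ) (x:X) a b, mXAA x a (r•b) = r • mXAA x a b :=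
    fun r x a b => linmap_real_smul (hm3 x a) r b
  have m7s : ∀ (r:ℝ) a b (x:X), mAAX (r•a) b x = r • mAAX a b x :=
    fun r a b x => linmap_real_smul (hm7 b x) r a
  have m8s : ∀ (r:ℝ) a b (x:X), mAAX a (r•b) x = r • mAAX a b x :=
    fun r a b x => linmap_real_smul (hm8 a x) r b
  have m9s : ∀ (r:ℝ) a b (x:X), mAAX a b (r•x) = r • mAAX a b x :=
    fun r a b x => linmap_real_smul (hm9 a b) r x
  have ta1s : ∀ (r:ℝ) a b c, tA (r•a) b c = r • tA a b c :=
    fun r a b c => linmap_real_smul (htA1 b c) r a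
  have ta2s : ∀ (r:ℝ) a b c, tA a (r•b) c = r • tA a b c :=
    fun r a b c => linmap_real_smul (htA2 a c) r b
  have ta3s : ∀ (r:ℝ) a b c, tA a b (r•c) = r • tA a b c :=
    fun r a b c => linmap_real_smul (htA3 a b) r c
  have mXb : ∀ (a b : A) (x : X), ‖mXAA x a b‖ ≤ ‖a‖ * ‖b‖ * ‖x‖ :=
    fun a b x => le_trans (le_trans (le_max_left _ _) (le_max_left _ _)) (hmnorm x a b)
  have mAb : ∀ (a b : A) (x : X), ‖mAAX a b x‖ ≤ ‖a‖ * ‖b‖ * ‖x‖ :=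
    fun a b x => le_trans (le_max_right _ _) (hmnorm x a b)
  have tX : ∀ {au bu : ℕ → A} {xu : ℕ → X} {a b : A} {x : X},
      Tendsto au atTop (𝓝 a) → Tendsto bu atTop (𝓝 b) → Tendsto xu atTop (𝓝 x) →
      Tendsto (fun n => mXAA (xu n) (au n) (bu n)) atTop (𝓝 (mXAA x a b)) := by
    intro au bu xu a b x ha hb hx
    exact tri_tendsto (fun a b (x:X) => mXAA x a b) (fun b x => hm2 x b)
      (fun a x => hm3 x a) (fun a b => hm1 a b) (fun a b x => mXb a b x) ha hb hx
  have tAX : ∀ {au bu : ℕ → A} {xu : ℕ → X} {a b : A} {x : X},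
      Tendsto au atTop (𝓝 a) → Tendsto bu atTop (𝓝 b) → Tendsto xu atTop (𝓝 x) →
      Tendsto (fun n => mAAX (au n) (bu n) (xu n)) atTop (𝓝 (mAAX a b x)) := by
    intro au bu xu a b x ha hb hx
    exact tri_tendsto mAAX (fun b x => hm7 b x) (fun a x => hm8 a x)
      (fun a b => hm9 a b) (fun a b x => mAb a b x) ha hb hx
  have hder : ∀ u v w : A, D (tA u v w) =
      twistedBracket mXAA mAAX (⇑σ) (⇑τ) (⇑ξ) (D u) v w
      - twistedBracket mXAA mAAX (⇑σ) (⇑τ) (⇑ξ) (D v) u w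
      - twistedBracket mXAA mAAX (⇑σ) (⇑τ) (⇑ξ) (D w) v u := by
    intro u v w
    simp only [twistedBracket]
    have h3n : Tendsto (fun n : ℕ => 3*n) atTop atTop :=
      tendsto_atTop_mono (fun n : ℕ => by simp only [id_eq]; omega : ∀ n : ℕ, id n ≤ 3*n) tendsto_id
    have hDt3 : Tendsto (fun n : ℕ => ((2:ℝ)^(3*n))⁻¹ • f ((2^(3*n):ℝ) • tA u v w))
        atTop (𝓝 (D (tA u v w))) := (hDt (tA u v w)).comp h3n
    have B1 := tX (hτt v) (hξt w) (hDt u)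
    have B2 := tAX (hσt w) (hτt v) (hDt u)
    have B3 := tX (hτt u) (hξt w) (hDt v)
    have B4 := tAX (hσt w) (hτt u) (hDt v)
    have B5 := tX (hτt v) (hξt u) (hDt w)
    have B6 := tAX (hσt u) (hτt v) (hDt w)
    have hT1 : Tendsto (fun n : ℕ =>
        ((2:ℝ)^(3*n))⁻¹ • f ((2^(3*n):ℝ) • tA u v w)
        - (mXAA (((2:ℝ)^n)⁻¹ • f ((2^n:ℝ)•u)) (((2:ℝ)^n)⁻¹ • h ((2^n:ℝ)•v))
             (((2:ℝ)^n)⁻¹ • k ((2^n:ℝ)•w))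
           - mAAX (((2:ℝ)^n)⁻¹ • g ((2^n:ℝ)•w)) (((2:ℝ)^n)⁻¹ • h ((2^n:ℝ)•v))
             (((2:ℝ)^n)⁻¹ • f ((2^n:ℝ)•u)))
        + (mXAA (((2:ℝ)^n)⁻¹ • f ((2^n:ℝ)•v)) (((2:ℝ)^n)⁻¹ • h ((2^n:ℝ)•u))
             (((2:ℝ)^n)⁻¹ • k ((2^n:ℝ)•w))
           - mAAX (((2:ℝ)^n)⁻¹ • g ((2^n:ℝ)•w)) (((2:ℝ)^n)⁻¹ • h ((2^n:ℝ)•u))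
             (((2:ℝ)^n)⁻¹ • f ((2^n:ℝ)•v)))
        + (mXAA (((2:ℝ)^n)⁻¹ • f ((2^n:ℝ)•w)) (((2:ℝ)^n)⁻¹ • h ((2^n:ℝ)•v))
             (((2:ℝ)^n)⁻¹ • k ((2^n:ℝ)•u))
           - mAAX (((2:ℝ)^n)⁻¹ • g ((2^n:ℝ)•u)) (((2:ℝ)^n)⁻¹ • h ((2^n:ℝ)•v))
             (((2:ℝ)^n)⁻¹ • f ((2^n:ℝ)•w))))
        atTop (𝓝 (D (tA u v w)
          - (mXAA (D u) (τ v) (ξ w) - mAAX (σ w) (τ v) (D u))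
          + (mXAA (D v) (τ u) (ξ w) - mAAX (σ w) (τ u) (D v))
          + (mXAA (D w) (τ v) (ξ u) - mAAX (σ u) (τ v) (D w)))) :=
      ((hDt3.sub (B1.sub B2)).add (B3.sub B4)).add (B5.sub B6)
    have hT0 : Tendsto (fun n : ℕ =>
        ((2:ℝ)^(3*n))⁻¹ • f ((2^(3*n):ℝ) • tA u v w)
        - (mXAA (((2:ℝ)^n)⁻¹ • f ((2^n:ℝ)•u)) (((2:ℝ)^n)⁻¹ • h ((2^n:ℝ)•v))
             (((2:ℝ)^n)⁻¹ • k ((2^n:ℝ)•w))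
           - mAAX (((2:ℝ)^n)⁻¹ • g ((2^n:ℝ)•w)) (((2:ℝ)^n)⁻¹ • h ((2^n:ℝ)•v))
             (((2:ℝ)^n)⁻¹ • f ((2^n:ℝ)•u)))
        + (mXAA (((2:ℝ)^n)⁻¹ • f ((2^n:ℝ)•v)) (((2:ℝ)^n)⁻¹ • h ((2^n:ℝ)•u))
             (((2:ℝ)^n)⁻¹ • k ((2^n:ℝ)•w))
           - mAAX (((2:ℝ)^n)⁻¹ • g ((2^n:ℝ)•w)) (((2:ℝ)^n)⁻¹ • h ((2^n:ℝ)•u))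
             (((2:ℝ)^n)⁻¹ • f ((2^n:ℝ)•v)))
        + (mXAA (((2:ℝ)^n)⁻¹ • f ((2^n:ℝ)•w)) (((2:ℝ)^n)⁻¹ • h ((2^n:ℝ)•v))
             (((2:ℝ)^n)⁻¹ • k ((2^n:ℝ)•u))
           - mAAX (((2:ℝ)^n)⁻¹ • g ((2^n:ℝ)•u)) (((2:ℝ)^n)⁻¹ • h ((2^n:ℝ)•v))
             (((2:ℝ)^n)⁻¹ • f ((2^n:ℝ)•w))))
        atTop (𝓝 0) := by
      apply squeeze_zero_norm
        (a := fun n : ℕ => φ 0 0 ((2^n:ℝ)•u) ((2^n:ℝ)•v) ((2^n:ℝ)•w))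
      · intro n
        have hinner := hfineq 1 (by simp) 0 0 ((2^n:ℝ)•u) ((2^n:ℝ)•v) ((2^n:ℝ)•w)
        simp only [one_smul, smul_zero, zero_add, hf0, sub_zero, twistedBracket] at hinner
        have hpow : (2:ℝ)^n * (2:ℝ)^n * (2:ℝ)^n = (2:ℝ)^(3*n) := by ring
        have hinv3 : ((2:ℝ)^n)⁻¹ * ((2:ℝ)^n)⁻¹ * ((2:ℝ)^n)⁻¹ = ((2:ℝ)^(3*n))⁻¹ := by
          rw [← hpow, mul_inv, mul_inv]
        have harg : ((2:ℝ)^(3*n)) • tA u v w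
            = tA ((2^n:ℝ)•u) ((2^n:ℝ)•v) ((2^n:ℝ)•w) := by
          rw [ta1s, ta2s, ta3s, smul_smul, smul_smul, hpow]
        have hX3 : ∀ p q s : A, mXAA (((2:ℝ)^n)⁻¹ • f ((2^n:ℝ)•p))
            (((2:ℝ)^n)⁻¹ • h ((2^n:ℝ)•q)) (((2:ℝ)^n)⁻¹ • k ((2^n:ℝ)•s))
            = ((2:ℝ)^(3*n))⁻¹ • mXAA (f ((2^n:ℝ)•p)) (h ((2^n:ℝ)•q)) (k ((2^n:ℝ)•s)) := by
          intro p q s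
          rw [m1s, m2s, m3s, smul_smul, smul_smul, hinv3]
        have hY3 : ∀ p q s : A, mAAX (((2:ℝ)^n)⁻¹ • g ((2^n:ℝ)•p))
            (((2:ℝ)^n)⁻¹ • h ((2^n:ℝ)•q)) (((2:ℝ)^n)⁻¹ • f ((2^n:ℝ)•s))
            = ((2:ℝ)^(3*n))⁻¹ • mAAX (g ((2^n:ℝ)•p)) (h ((2^n:ℝ)•q)) (f ((2^n:ℝ)•s)) := by
          intro p q s
          rw [m7s, m8s, m9s, smul_smul, smul_smul, hinv3]
        have heq : ((2:ℝ)^(3*n))⁻¹ • f ((2^(3*n):ℝ) • tA u v w)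
            - (mXAA (((2:ℝ)^n)⁻¹ • f ((2^n:ℝ)•u)) (((2:ℝ)^n)⁻¹ • h ((2^n:ℝ)•v))
                 (((2:ℝ)^n)⁻¹ • k ((2^n:ℝ)•w))
               - mAAX (((2:ℝ)^n)⁻¹ • g ((2^n:ℝ)•w)) (((2:ℝ)^n)⁻¹ • h ((2^n:ℝ)•v))
                 (((2:ℝ)^n)⁻¹ • f ((2^n:ℝ)•u)))
            + (mXAA (((2:ℝ)^n)⁻¹ • f ((2^n:ℝ)•v)) (((2:ℝ)^n)⁻¹ • h ((2^n:ℝ)•u))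
                 (((2:ℝ)^n)⁻¹ • k ((2^n:ℝ)•w))
               - mAAX (((2:ℝ)^n)⁻¹ • g ((2^n:ℝ)•w)) (((2:ℝ)^n)⁻¹ • h ((2^n:ℝ)•u))
                 (((2:ℝ)^n)⁻¹ • f ((2^n:ℝ)•v)))
            + (mXAA (((2:ℝ)^n)⁻¹ • f ((2^n:ℝ)•w)) (((2:ℝ)^n)⁻¹ • h ((2^n:ℝ)•v))
                 (((2:ℝ)^n)⁻¹ • k ((2^n:ℝ)•u))
               - mAAX (((2:ℝ)^n)⁻¹ • g ((2^n:ℝ)•u)) (((2:ℝ)^n)⁻¹ • h ((2^n:ℝ)•v))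
                 (((2:ℝ)^n)⁻¹ • f ((2^n:ℝ)•w)))
            = ((2:ℝ)^(3*n))⁻¹ • (f (tA ((2^n:ℝ)•u) ((2^n:ℝ)•v) ((2^n:ℝ)•w))
              - (mXAA (f ((2^n:ℝ)•u)) (h ((2^n:ℝ)•v)) (k ((2^n:ℝ)•w))
                 - mAAX (g ((2^n:ℝ)•w)) (h ((2^n:ℝ)•v)) (f ((2^n:ℝ)•u)))
              + (mXAA (f ((2^n:ℝ)•v)) (h ((2^n:ℝ)•u)) (k ((2^n:ℝ)•w))
                 - mAAX (g ((2^n:ℝ)•w)) (h ((2^n:ℝ)•u)) (f ((2^n:ℝ)•v)))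
              + (mXAA (f ((2^n:ℝ)•w)) (h ((2^n:ℝ)•v)) (k ((2^n:ℝ)•u))
                 - mAAX (g ((2^n:ℝ)•u)) (h ((2^n:ℝ)•v)) (f ((2^n:ℝ)•w)))) := by
          rw [hX3 u v w, hX3 v u w, hX3 w v u, hY3 w v u, hY3 w u v, hY3 u v w, harg]
          simp only [smul_sub, smul_add]
        rw [heq, norm_smul, Real.norm_eq_abs, abs_of_pos (by positivity)]
        have hle1 : ((2:ℝ)^(3*n))⁻¹ ≤ 1 := by
          rw [inv_le_one_iff₀]; right; exact one_le_pow₀ (by norm_num)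
        calc ((2:ℝ)^(3*n))⁻¹ * ‖f (tA ((2^n:ℝ)•u) ((2^n:ℝ)•v) ((2^n:ℝ)•w))
              - (mXAA (f ((2^n:ℝ)•u)) (h ((2^n:ℝ)•v)) (k ((2^n:ℝ)•w))
                 - mAAX (g ((2^n:ℝ)•w)) (h ((2^n:ℝ)•v)) (f ((2^n:ℝ)•u)))
              + (mXAA (f ((2^n:ℝ)•v)) (h ((2^n:ℝ)•u)) (k ((2^n:ℝ)•w))
                 - mAAX (g ((2^n:ℝ)•w)) (h ((2^n:ℝ)•u)) (f ((2^n:ℝ)•v)))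
              + (mXAA (f ((2^n:ℝ)•w)) (h ((2^n:ℝ)•v)) (k ((2^n:ℝ)•u))
                 - mAAX (g ((2^n:ℝ)•u)) (h ((2^n:ℝ)•v)) (f ((2^n:ℝ)•w)))‖
            ≤ 1 * φ 0 0 ((2^n:ℝ)•u) ((2^n:ℝ)•v) ((2^n:ℝ)•w) :=
              mul_le_mul hle1 hinner (norm_nonneg _) zero_le_one
          _ = φ 0 0 ((2^n:ℝ)•u) ((2^n:ℝ)•v) ((2^n:ℝ)•w) := one_mul _
      · have hsum3 : Summable (fun n : ℕ =>
            φ 0 0 ((2^n:ℝ)•u) ((2^n:ℝ)•v) ((2^n:ℝ)•w)) := by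
          simpa using hφsum 0 0 u v w
        exact hsum3.tendsto_atTop_zero
    have h0 := tendsto_nhds_unique hT1 hT0
    have h5 : D (tA u v w)
        - ((mXAA (D u) (τ v) (ξ w) - mAAX (σ w) (τ v) (D u))
          - (mXAA (D v) (τ u) (ξ w) - mAAX (σ w) (τ u) (D v))
          - (mXAA (D w) (τ v) (ξ u) - mAAX (σ u) (τ v) (D w))) = 0 := by
      rw [← h0]; abel
    exact sub_eq_zero.mp h5
  exact ⟨σ, τ, ξ, D, hσb, hτb, hξb, hDb, hder, hDt, hσt, hτt, hξt, hσu, hτu, hξu, hDu⟩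
end

section
/- Let A be a Banach ternary algebra and X a ternary Banach A-module, and let 𝕋¹ = {λ ∈ ℂ : |λ| = 1}. Suppose f : A → X is a mapping with f(0) = 0, g, h, k : A → A are mappings with g(0) = h(0) = k(0) = 0, and φ : A×A×A → [0,∞) is a function such that φ̃(x,y,u) := (1/2) Σ_{n=0}^∞ φ(2ⁿx, 2ⁿy, 2ⁿu) < ∞ for all x,y,u ∈ A, and such that for all λ ∈ 𝕋¹ and all x,y,u ∈ A: ‖f(λx + λy + [uuu]_A) − λf(x) − λf(y) − [[f(u)uu]_X]_{(g,h,k)} + [[f(u)uu]_X]_{(g,h,k)} + [[f(u)uu]_X]_{(g,h,k)}‖ ≤ φ(x,y,u), ‖g(λx+λy) − λg(x) − λg(y)‖ ≤ φ(x,y,0), ‖h(λx+λy) − λh(x) − λh(y)‖ ≤ φ(x,y,0), and ‖k(λx+λy) − λk(x) − λk(y)‖ ≤ φ(x,y,0). Then there exist unique ℂ-linear mappings σ, τ, ξ : A → A with ‖g(x) − σ(x)‖ ≤ φ̃(x,x,0), ‖h(x) − τ(x)‖ ≤ φ̃(x,x,0), ‖k(x) − ξ(x)‖ ≤ φ̃(x,x,0)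 for all x ∈ A, and there exists a unique ℂ-linear mapping D : A → X with ‖f(x) − D(x)‖ ≤ φ̃(x,x,0) for all x ∈ A which satisfies the Jordan Lie ternary (σ,τ,ξ)-derivation identity D([uuu]_A) = [[D(u)uu]_X]_{(σ,τ,ξ)} − [[D(u)uu]_X]_{(σ,τ,ξ)} − [[D(u)uu]_X]_{(σ,τ,ξ)} for all u ∈ A. -/
open Filter Topology

private lemma real_smul_clinear {V W : Type*} [AddCommGroup V] [Module ℂ V]
    [AddCommGroup W] [Module ℂ W] {T : V → W} (hT : IsLinearMap ℂ T) (r : ℝ) (v : V) :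
    T (r • v) = r • T v := by
  rw [← Complex.coe_smul, hT.map_smul, Complex.coe_smul]


section HU
variable {E F : Type*} [NormedAddCommGroup E] [NormedSpace ℂ E]
    [NormedAddCommGroup F] [NormedSpace ℂ F] [CompleteSpace F]

set_option maxHeartbeats 1000000 in
lemma hyers_ulam (ψ : E → E → ℝ) (hψ0 : ∀ x y, 0 ≤ ψ x y)
    (hψsum : ∀ x y, Summable fun n : ℕ => ψ ((2 ^ n : ℝ) • x) ((2 ^ n : ℝ) • y))
    (f : E → F) (hf0 : f 0 = 0)
    (hineq : ∀ lam : ℂ, ‖lam‖ = 1 → ∀ x y,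
       ‖f (lam • x + lam • y) - lam • f x - lam • f y‖ ≤ ψ x y) :
    ∃ L : E →ₗ[ℂ] F,
      (∀ x, Tendsto (fun n : ℕ => (1 / 2 ^ n : ℝ) • f ((2 ^ n : ℝ) • x)) atTop (𝓝 (L x))) ∧
      (∀ x, ‖f x - L x‖ ≤ (1 / 2) * ∑' n : ℕ, ψ ((2 ^ n : ℝ) • x) ((2 ^ n : ℝ) • x)) ∧
      (∀ L' : E →ₗ[ℂ] F,
        (∀ x, ‖f x - L' x‖ ≤ (1 / 2) * ∑' n : ℕ, ψ ((2 ^ n : ℝ) • x) ((2 ^ n : ℝ) • x)) →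
        L' = L) := by
  classical
  set seq : E → ℕ → F := fun x n => (1 / 2 ^ n : ℝ) • f ((2 ^ n : ℝ) • x) with hseq
  have hstep : ∀ y : E, ‖f ((2 : ℝ) • y) - (2 : ℝ) • f y‖ ≤ ψ y y := by
    intro y
    have := hineq 1 (by simp) y y
    simpa [one_smul, two_smul, sub_sub] using this
  have hdist : ∀ x n, dist (seq x n) (seq x (n + 1)) ≤
      ψ ((2 ^ n : ℝ) • x) ((2 ^ n : ℝ) • x) / 2 ^ (n + 1) := by
    intro x n
    have h1 : ((2 : ℝ) ^ (n + 1)) • x = (2 : ℝ) • ((2 ^ n : ℝ) • x) := by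
      rw [smul_smul]; ring_nf
    rw [dist_eq_norm]
    have : seq x n - seq x (n + 1) =
        (1 / 2 ^ (n + 1) : ℝ) • ((2 : ℝ) • f ((2 ^ n : ℝ) • x) - f ((2 : ℝ) • ((2 ^ n : ℝ) • x))) := by
      rw [hseq]; simp only [h1, smul_sub, smul_smul]
      congr 1
      · congr 1; ring
    rw [this, norm_smul]
    have h2 := hstep ((2 ^ n : ℝ) • x)
    rw [norm_sub_rev] at h2
    have : ‖(1 / 2 ^ (n + 1) : ℝ)‖ = 1 / 2 ^ (n + 1) := by
      rw [Real.norm_eq_abs, abs_of_pos]; positivity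
    rw [this]
    calc (1 / 2 ^ (n+1) : ℝ) * ‖(2 : ℝ) • f ((2 ^ n : ℝ) • x) - f ((2 : ℝ) • ((2 ^ n : ℝ) • x))‖
        ≤ (1 / 2 ^ (n+1) : ℝ) * ψ ((2 ^ n : ℝ) • x) ((2 ^ n : ℝ) • x) := by
          gcongr
      _ = ψ ((2 ^ n : ℝ) • x) ((2 ^ n : ℝ) • x) / 2 ^ (n+1) := by ring
  have hdsum : ∀ x, Summable (fun n => ψ ((2 ^ n : ℝ) • x) ((2 ^ n : ℝ) • x) / 2 ^ (n + 1)) := by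
    intro x
    apply Summable.of_nonneg_of_le (fun n => div_nonneg (hψ0 _ _) (by positivity))
      (fun n => ?_) ((hψsum x x).mul_left (1/2))
    rw [div_eq_mul_inv]
    calc ψ ((2 ^ n : ℝ) • x) ((2 ^ n : ℝ) • x) * (2 ^ (n+1))⁻¹
        ≤ ψ ((2 ^ n : ℝ) • x) ((2 ^ n : ℝ) • x) * (1/2) := by
          gcongr
          · exact hψ0 _ _
          · rw [one_div]
            apply inv_anti₀ (by norm_num)
            calc (2:ℝ) = 2^1 := (pow_one 2).symm
            _ ≤ 2 ^ (n+1) := pow_le_pow_right₀ one_le_two (by omega)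
      _ = 1/2 * ψ ((2 ^ n : ℝ) • x) ((2 ^ n : ℝ) • x) := by ring
  have hcauchy : ∀ x, CauchySeq (seq x) := fun x =>
    cauchySeq_of_dist_le_of_summable _ (hdist x) (hdsum x)
  have hlim : ∀ x, ∃ l : F, Tendsto (seq x) atTop (𝓝 l) := fun x =>
    cauchySeq_tendsto_of_complete (hcauchy x)
  choose Lf htend using hlim
  -- bound
  have hbound : ∀ x, ‖f x - Lf x‖ ≤
      (1 / 2) * ∑' n : ℕ, ψ ((2 ^ n : ℝ) • x) ((2 ^ n : ℝ) • x) := by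
    intro x
    have h0 : seq x 0 = f x := by simp [hseq]
    have := dist_le_tsum_of_dist_le_of_tendsto₀ _ (hdist x) (hdsum x) (htend x)
    rw [h0, dist_eq_norm] at this
    refine this.trans ?_
    rw [← tsum_mul_left]
    apply Summable.tsum_le_tsum _ (hdsum x) ((hψsum x x).mul_left (1/2))
    intro n
    rw [div_eq_mul_inv]
    calc ψ ((2 ^ n : ℝ) • x) ((2 ^ n : ℝ) • x) * (2 ^ (n+1))⁻¹
        ≤ ψ ((2 ^ n : ℝ) • x) ((2 ^ n : ℝ) • x) * (1/2) := by
          gcongr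
          · exact hψ0 _ _
          · rw [one_div]
            apply inv_anti₀ (by norm_num)
            calc (2:ℝ) = 2^1 := (pow_one 2).symm
            _ ≤ 2 ^ (n+1) := pow_le_pow_right₀ one_le_two (by omega)
      _ = 1/2 * ψ ((2 ^ n : ℝ) • x) ((2 ^ n : ℝ) • x) := by ring
  have hψtend : ∀ x y, Tendsto (fun n : ℕ => ψ ((2 ^ n : ℝ) • x) ((2 ^ n : ℝ) • y)) atTop (𝓝 0) :=
    fun x y => (hψsum x y).tendsto_atTop_zero
  have hnle1 : ∀ n : ℕ, ‖(1 / 2 ^ n : ℝ)‖ ≤ 1 := by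
    intro n
    rw [Real.norm_eq_abs, abs_of_pos (by positivity), div_le_one (by positivity)]
    exact one_le_pow₀ one_le_two
  have hL0 : Lf 0 = 0 := by
    refine tendsto_nhds_unique (htend 0) ?_
    have h0 : seq 0 = fun _ : ℕ => (0 : F) := by funext n; simp [hseq, hf0]
    rw [h0]
    exact tendsto_const_nhds
  have hadd : ∀ x y, Lf (x + y) = Lf x + Lf y := by
    intro x y
    have h1 : Tendsto (fun n => seq (x + y) n - seq x n - seq y n) atTop
        (𝓝 (Lf (x + y) - Lf x - Lf y)) := ((htend (x + y)).sub (htend x)).sub (htend y)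
    have h2 : Tendsto (fun n => seq (x + y) n - seq x n - seq y n) atTop (𝓝 0) := by
      apply squeeze_zero_norm _ (hψtend x y)
      intro n
      have key := hineq 1 (by simp) ((2 ^ n : ℝ) • x) ((2 ^ n : ℝ) • y)
      simp only [one_smul] at key
      have e : (2 ^ n : ℝ) • (x + y) = (2 ^ n : ℝ) • x + (2 ^ n : ℝ) • y := smul_add _ _ _
      have e1 : seq (x + y) n - seq x n - seq y n = (1 / 2 ^ n : ℝ) •
          (f ((2 ^ n : ℝ) • x + (2 ^ n : ℝ) • y) - f ((2 ^ n : ℝ) • x) - f ((2 ^ n : ℝ) • y)) := by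
        rw [hseq]; dsimp only; rw [e, smul_sub, smul_sub]
      rw [e1, norm_smul]
      calc ‖(1 / 2 ^ n : ℝ)‖ * ‖_‖ ≤ 1 * ψ ((2 ^ n : ℝ) • x) ((2 ^ n : ℝ) • y) :=
            mul_le_mul (hnle1 n) key (norm_nonneg _) one_pos.le
        _ = ψ ((2 ^ n : ℝ) • x) ((2 ^ n : ℝ) • y) := one_mul _
    have := tendsto_nhds_unique h1 h2
    have h3 : Lf (x + y) - Lf x - Lf y = 0 := this
    rw [sub_sub, sub_eq_zero] at h3
    exact h3
  have hhom : ∀ lam : ℂ, ‖lam‖ = 1 → ∀ x, Lf (lam • x) = lam • Lf x := by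
    intro lam hl x
    have hshift : Tendsto (fun n => seq (lam • x) (n + 1)) atTop (𝓝 (Lf (lam • x))) :=
      (htend (lam • x)).comp (tendsto_add_atTop_nat 1)
    have h1 : Tendsto (fun n => seq (lam • x) (n + 1) - lam • seq x n) atTop
        (𝓝 (Lf (lam • x) - lam • Lf x)) := hshift.sub ((htend x).const_smul lam)
    have h2 : Tendsto (fun n => seq (lam • x) (n + 1) - lam • seq x n) atTop (𝓝 0) := by
      apply squeeze_zero_norm _ (hψtend x x)
      intro n
      have key := hineq lam hl ((2 ^ n : ℝ) • x) ((2 ^ n : ℝ) • x)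
      have e : lam • ((2 ^ n : ℝ) • x) + lam • ((2 ^ n : ℝ) • x) = (2 ^ (n + 1) : ℝ) • (lam • x) := by
        rw [smul_comm lam ((2 ^ n : ℝ)) x, ← add_smul]
        congr 1
        rw [pow_succ]; ring
      have e1 : seq (lam • x) (n + 1) - lam • seq x n = (1 / 2 ^ (n + 1) : ℝ) •
          (f (lam • ((2 ^ n : ℝ) • x) + lam • ((2 ^ n : ℝ) • x))
            - lam • f ((2 ^ n : ℝ) • x) - lam • f ((2 ^ n : ℝ) • x)) := by
        rw [hseq]; dsimp only; rw [e]
        rw [smul_sub, smul_sub]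
        have e2 : lam • ((1 / 2 ^ n : ℝ) • f ((2 ^ n : ℝ) • x))
            = (1 / 2 ^ (n + 1) : ℝ) • (lam • f ((2 ^ n : ℝ) • x))
              + (1 / 2 ^ (n + 1) : ℝ) • (lam • f ((2 ^ n : ℝ) • x)) := by
          rw [smul_comm lam ((1 / 2 ^ n : ℝ)), ← add_smul]
          congr 1
          rw [pow_succ]; ring
        rw [e2, sub_sub]
      rw [e1, norm_smul]
      calc ‖(1 / 2 ^ (n + 1) : ℝ)‖ * ‖_‖ ≤ 1 * ψ ((2 ^ n : ℝ) • x) ((2 ^ n : ℝ) • x) :=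
            mul_le_mul (hnle1 (n + 1)) key (norm_nonneg _) one_pos.le
        _ = ψ ((2 ^ n : ℝ) • x) ((2 ^ n : ℝ) • x) := one_mul _
    have h3 : Lf (lam • x) - lam • Lf x = 0 := tendsto_nhds_unique h1 h2
    rw [sub_eq_zero] at h3
    exact h3
  -- ℂ-linearity from additivity + circle homogeneity
  have hnat : ∀ (n : ℕ) (x), Lf ((n : ℂ) • x) = (n : ℂ) • Lf x := by
    intro n
    induction n with
    | zero => intro x; simp [hL0]
    | succ m ih => intro x
                   push_cast
                   rw [add_smul, add_smul, one_smul, one_smul, hadd, ih]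
  have hhalf : ∀ t : ℝ, |t| ≤ 1 → ∀ x, Lf (((2 * t : ℝ) : ℂ) • x) = ((2 * t : ℝ) : ℂ) • Lf x := by
    intro t ht x
    have h1t : (0:ℝ) ≤ 1 - t ^ 2 := by nlinarith [abs_nonneg t, sq_abs t, abs_le.1 ht]
    set lam : ℂ := (t : ℂ) + (Real.sqrt (1 - t ^ 2) : ℂ) * Complex.I with hlam
    have habs : ‖lam‖ = 1 := by
      have hns : Complex.normSq lam = 1 := by
        rw [hlam]
        simp [Complex.normSq_apply]
        nlinarith [Real.sq_sqrt h1t]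
      rw [Complex.norm_def, hns, Real.sqrt_one]
    have habs' : ‖starRingEnd ℂ lam‖ = 1 := by rwa [Complex.norm_conj]
    have hsum : lam + starRingEnd ℂ lam = ((2 * t : ℝ) : ℂ) := by
      rw [hlam]; simp [Complex.ext_iff]; ring
    calc Lf (((2 * t : ℝ) : ℂ) • x) = Lf (lam • x + (starRingEnd ℂ lam) • x) := by
          rw [← add_smul, hsum]
      _ = lam • Lf x + (starRingEnd ℂ lam) • Lf x := by
          rw [hadd, hhom lam habs, hhom _ habs']
      _ = ((2 * t : ℝ) : ℂ) • Lf x := by rw [← add_smul, hsum]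
  have hreal : ∀ t : ℝ, ∀ x, Lf ((t : ℂ) • x) = (t : ℂ) • Lf x := by
    intro t x
    obtain ⟨n, hn0, hn1⟩ : ∃ n : ℕ, 0 < n ∧ |t| ≤ n :=
      ⟨⌈|t|⌉₊ + 1, Nat.succ_pos _, le_trans (Nat.le_ceil _) (by exact_mod_cast Nat.le_succ _)⟩
    have hnR : ((n : ℝ)) ≠ 0 := by positivity
    have hnC : ((n : ℂ)) ≠ 0 := Nat.cast_ne_zero.2 hn0.ne'
    have htn : |t / (2 * n)| ≤ 1 := by
      rw [abs_div, div_le_one (by positivity), abs_of_pos (by positivity : (0:ℝ) < 2 * n)]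
      nlinarith
    have key := hhalf (t / (2 * n)) htn x
    have e : (2 * (t / (2 * n)) : ℝ) = t / n := by field_simp
    rw [e] at key
    have e2 : (t : ℂ) • x = (n : ℂ) • (((t / n : ℝ) : ℂ) • x) := by
      rw [smul_smul]
      congr 1
      push_cast
      rw [mul_comm, div_mul_cancel₀ _ hnC]
    rw [e2, hnat, key, smul_smul]
    congr 1
    push_cast
    rw [mul_comm, div_mul_cancel₀ _ hnC]
  have hsmul : ∀ (c : ℂ) (x), Lf (c • x) = c • Lf x := by
    intro c x
    rcases eq_or_ne c 0 with rfl | hc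
    · simp [hL0]
    · set r : ℝ := ‖c‖ with hr
      have hrpos : 0 < r := by simpa [hr] using norm_pos_iff.mpr hc
      have hrC : ((r : ℂ)) ≠ 0 := by exact_mod_cast hrpos.ne'
      have habs : ‖c / (r : ℂ)‖ = 1 := by
        rw [norm_div, Complex.norm_real, Real.norm_of_nonneg hrpos.le]; exact div_self hrpos.ne'
      have e : c • x = (r : ℂ) • ((c / (r : ℂ)) • x) := by
        rw [smul_smul]
        congr 1
        rw [mul_comm, div_mul_cancel₀ _ hrC]
      rw [e, hreal, hhom _ habs, smul_smul]
      congr 1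
      rw [mul_comm, div_mul_cancel₀ _ hrC]
  set L : E →ₗ[ℂ] F := { toFun := Lf, map_add' := hadd, map_smul' := hsmul } with hLdef
  refine ⟨L, htend, hbound, ?_⟩
  -- uniqueness
  intro L' hL'
  ext x
  have key : ∀ n : ℕ, ‖L' x - L x‖ ≤ ∑' m : ℕ, ψ ((2 ^ (m + n) : ℝ) • x) ((2 ^ (m + n) : ℝ) • x) := by
    intro n
    have e1 : L' x - L x = (1 / 2 ^ n : ℝ) • (L' ((2 ^ n : ℝ) • x) - L ((2 ^ n : ℝ) • x)) := by
      have c1 : L' ((2 ^ n : ℝ) • x) = (2 ^ n : ℝ) • L' x :=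
        (L'.restrictScalars ℝ).map_smul (2 ^ n : ℝ) x
      have c2 : L ((2 ^ n : ℝ) • x) = (2 ^ n : ℝ) • L x :=
        (L.restrictScalars ℝ).map_smul (2 ^ n : ℝ) x
      rw [c1, c2, ← smul_sub, smul_smul]
      rw [show (1 / 2 ^ n : ℝ) * 2 ^ n = 1 by field_simp]
      rw [one_smul]
    have e2 : L' ((2 ^ n : ℝ) • x) - L ((2 ^ n : ℝ) • x)
        = (f ((2 ^ n : ℝ) • x) - L ((2 ^ n : ℝ) • x)) - (f ((2 ^ n : ℝ) • x) - L' ((2 ^ n : ℝ) • x)) := by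
      abel
    have hb1 := hbound ((2 ^ n : ℝ) • x)
    have hb2 := hL' ((2 ^ n : ℝ) • x)
    have hsum_eq : ∀ m : ℕ, ψ ((2 ^ m : ℝ) • ((2 ^ n : ℝ) • x)) ((2 ^ m : ℝ) • ((2 ^ n : ℝ) • x))
        = ψ ((2 ^ (m + n) : ℝ) • x) ((2 ^ (m + n) : ℝ) • x) := by
      intro m
      rw [smul_smul, ← pow_add]
    rw [e1, norm_smul, e2]
    calc ‖(1 / 2 ^ n : ℝ)‖ * ‖_‖
        ≤ 1 * (‖f ((2 ^ n : ℝ) • x) - L ((2 ^ n : ℝ) • x)‖ + ‖f ((2 ^ n : ℝ) • x) - L' ((2 ^ n : ℝ) • x)‖) :=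
          mul_le_mul (hnle1 n) (norm_sub_le _ _) (norm_nonneg _) one_pos.le
      _ ≤ 1 * ((1/2) * ∑' m : ℕ, ψ ((2 ^ (m + n) : ℝ) • x) ((2 ^ (m + n) : ℝ) • x)
            + (1/2) * ∑' m : ℕ, ψ ((2 ^ (m + n) : ℝ) • x) ((2 ^ (m + n) : ℝ) • x)) := by
          rw [one_mul, one_mul]
          apply add_le_add
          · refine hb1.trans (le_of_eq ?_)
            congr 1
            exact tsum_congr hsum_eq
          · refine hb2.trans (le_of_eq ?_)
            congr 1
            exact tsum_congr hsum_eq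
      _ = ∑' m : ℕ, ψ ((2 ^ (m + n) : ℝ) • x) ((2 ^ (m + n) : ℝ) • x) := by ring
  have htail : Tendsto (fun n : ℕ => ∑' m : ℕ, ψ ((2 ^ (m + n) : ℝ) • x) ((2 ^ (m + n) : ℝ) • x))
      atTop (𝓝 0) := tendsto_sum_nat_add (fun k => ψ ((2 ^ k : ℝ) • x) ((2 ^ k : ℝ) • x))
  have : ‖L' x - L x‖ ≤ 0 := ge_of_tendsto htail (Eventually.of_forall key)
  have h0 : L' x - L x = 0 := by
    rw [← norm_le_zero_iff]
    exact this
  rw [sub_eq_zero] at h0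
  exact h0
end HU


lemma trilinear_tendsto {E₁ E₂ E₃ F : Type*}
    [NormedAddCommGroup E₁] [NormedSpace ℂ E₁] [NormedAddCommGroup E₂] [NormedSpace ℂ E₂]
    [NormedAddCommGroup E₃] [NormedSpace ℂ E₃] [NormedAddCommGroup F] [NormedSpace ℂ F]
    (m : E₁ → E₂ → E₃ → F)
    (h1 : ∀ b c, IsLinearMap ℂ fun a => m a b c)
    (h2 : ∀ a c, IsLinearMap ℂ fun b => m a b c)
    (h3 : ∀ a b, IsLinearMap ℂ fun c => m a b c)
    (hn : ∀ a b c, ‖m a b c‖ ≤ ‖a‖ * ‖b‖ * ‖c‖)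
    {an : ℕ → E₁} {bn : ℕ → E₂} {cn : ℕ → E₃} {a : E₁} {b : E₂} {c : E₃}
    (ha : Tendsto an atTop (𝓝 a)) (hb : Tendsto bn atTop (𝓝 b))
    (hc : Tendsto cn atTop (𝓝 c)) :
    Tendsto (fun n => m (an n) (bn n) (cn n)) atTop (𝓝 (m a b c)) := by
  have key : ∀ n, m (an n) (bn n) (cn n) - m a b c
      = m (an n - a) (bn n) (cn n) + m a (bn n - b) (cn n) + m a b (cn n - c) := by
    intro n
    rw [(h1 (bn n) (cn n)).map_sub, (h2 a (cn n)).map_sub, (h3 a b).map_sub]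
    abel
  have hzero : Tendsto (fun n => m (an n) (bn n) (cn n) - m a b c) atTop (𝓝 0) := by
    apply squeeze_zero_norm (a := fun n =>
      ‖an n - a‖ * ‖bn n‖ * ‖cn n‖ + ‖a‖ * ‖bn n - b‖ * ‖cn n‖ + ‖a‖ * ‖b‖ * ‖cn n - c‖)
    · intro n
      rw [key n]
      refine (norm_add_le _ _).trans (add_le_add ((norm_add_le _ _).trans
        (add_le_add (hn _ _ _) (hn _ _ _))) (hn _ _ _))
    · have na : Tendsto (fun n => ‖an n - a‖) atTop (𝓝 0) :=
        tendsto_iff_norm_sub_tendsto_zero.1 ha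
      have nb : Tendsto (fun n => ‖bn n - b‖) atTop (𝓝 0) :=
        tendsto_iff_norm_sub_tendsto_zero.1 hb
      have nc : Tendsto (fun n => ‖cn n - c‖) atTop (𝓝 0) :=
        tendsto_iff_norm_sub_tendsto_zero.1 hc
      have l1 : Tendsto (fun n => ‖an n - a‖ * ‖bn n‖ * ‖cn n‖) atTop (𝓝 (0 * ‖b‖ * ‖c‖)) :=
        (na.mul hb.norm).mul hc.norm
      have l2 : Tendsto (fun n => ‖a‖ * ‖bn n - b‖ * ‖cn n‖) atTop (𝓝 (‖a‖ * 0 * ‖c‖)) :=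
        (tendsto_const_nhds.mul nb).mul hc.norm
      have l3 : Tendsto (fun n => ‖a‖ * ‖b‖ * ‖cn n - c‖) atTop (𝓝 (‖a‖ * ‖b‖ * 0)) :=
        tendsto_const_nhds.mul nc
      have := (l1.add l2).add l3
      simpa using this
  have := hzero.add (tendsto_const_nhds (x := m a b c))
  simpa using this

/-- Theorem 2.3: generalized Hyers–Ulam–Rassias stability of Jordan Lie ternary
`(σ,τ,ξ)`-derivations on Banach ternary algebras. -/
theorem stability_jordan_lie_ternary_derivation
    {A X : Type*}
    [NormedAddCommGroup A] [NormedSpace ℂ A] [CompleteSpace A]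
    [NormedAddCommGroup X] [NormedSpace ℂ X] [CompleteSpace X]
    -- the ternary product of the Banach ternary algebra A
    (tA : A → A → A → A)
    (htA1 : ∀ b c, IsLinearMap ℂ fun a => tA a b c)
    (htA2 : ∀ a c, IsLinearMap ℂ fun b => tA a b c)
    (htA3 : ∀ a b, IsLinearMap ℂ fun c => tA a b c)
    (htAassoc : ∀ a b c d e, tA (tA a b c) d e = tA a (tA b c d) e)
    (htAnorm : ∀ a b c, ‖tA a b c‖ ≤ ‖a‖ * ‖b‖ * ‖c‖)
    -- the ternary Banach A-module products on X
    (mXAA : X → A → A → X) (mAXA : A → X → A → X) (mAAX : A → A → X → X)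
    (hm1 : ∀ a b, IsLinearMap ℂ fun x : X => mXAA x a b)
    (hm2 : ∀ (x : X) b, IsLinearMap ℂ fun a => mXAA x a b)
    (hm3 : ∀ (x : X) a, IsLinearMap ℂ fun b => mXAA x a b)
    (hm4 : ∀ (x : X) b, IsLinearMap ℂ fun a => mAXA a x b)
    (hm5 : ∀ a b, IsLinearMap ℂ fun x : X => mAXA a x b)
    (hm6 : ∀ a (x : X), IsLinearMap ℂ fun b => mAXA a x b)
    (hm7 : ∀ b (x : X), IsLinearMap ℂ fun a => mAAX a b x)
    (hm8 : ∀ a (x : X), IsLinearMap ℂ fun b => mAAX a b x)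
    (hm9 : ∀ a b, IsLinearMap ℂ fun x : X => mAAX a b x)
    -- the mixed associativity identities
    (hx1 : ∀ a b c d (x : X), mAAX (tA a b c) d x = mAAX a (tA b c d) x)
    (hx1' : ∀ a b c d (x : X), mAAX a (tA b c d) x = mAAX a b (mAAX c d x))
    (hx2 : ∀ a b c d (x : X), mAXA (tA a b c) x d = mAXA a (mAAX b c x) d)
    (hx2' : ∀ a b c d (x : X), mAXA a (mAAX b c x) d = mAAX a b (mAXA c x d))
    (hx3 : ∀ a b c d (x : X), mXAA (mXAA x a b) c d = mXAA x (tA a b c) d)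
    (hx3' : ∀ a b c d (x : X), mXAA x (tA a b c) d = mXAA x a (tA b c d))
    (hx4 : ∀ a b c d (x : X), mXAA (mAXA a x b) c d = mAXA a (mXAA x b c) d)
    (hx4' : ∀ a b c d (x : X), mAXA a (mXAA x b c) d = mAXA a x (tA b c d))
    (hx5 : ∀ a b c d (x : X), mXAA (mAAX a b x) c d = mAXA a (mAXA b x c) d)
    (hx5' : ∀ a b c d (x : X), mAXA a (mAXA b x c) d = mAAX a b (mXAA x c d))
    -- the norm estimate for the module products
    (hmnorm : ∀ (x : X) a b,
      max (max ‖mXAA x a b‖ ‖mAXA a x b‖) ‖mAAX a b x‖ ≤ ‖a‖ * ‖b‖ * ‖x‖)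
    -- the data of the theorem
    (f : A → X) (g h k : A → A)
    (hf0 : f 0 = 0) (hg0 : g 0 = 0) (hh0 : h 0 = 0) (hk0 : k 0 = 0)
    (φ : A → A → A → ℝ)
    (hφnonneg : ∀ x y u, 0 ≤ φ x y u)
    (hφsum : ∀ x y u : A, Summable fun n : ℕ =>
      φ ((2 ^ n : ℝ) • x) ((2 ^ n : ℝ) • y) ((2 ^ n : ℝ) • u))
    (hfineq : ∀ lam : ℂ, ‖lam‖ = 1 → ∀ x y u : A,
      ‖f (lam • x + lam • y + tA u u u) - lam • f x - lam • f y
          - twistedBracket mXAA mAAX g h k (f u) u u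
          + twistedBracket mXAA mAAX g h k (f u) u u
          + twistedBracket mXAA mAAX g h k (f u) u u‖ ≤ φ x y u)
    (hgineq : ∀ lam : ℂ, ‖lam‖ = 1 → ∀ x y : A,
      ‖g (lam • x + lam • y) - lam • g x - lam • g y‖ ≤ φ x y 0)
    (hhineq : ∀ lam : ℂ, ‖lam‖ = 1 → ∀ x y : A,
      ‖h (lam • x + lam • y) - lam • h x - lam • h y‖ ≤ φ x y 0)
    (hkineq : ∀ lam : ℂ, ‖lam‖ = 1 → ∀ x y : A,
      ‖k (lam • x + lam • y) - lam • k x - lam • k y‖ ≤ φ x y 0) :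
    ∃ σ τ ξ : A →ₗ[ℂ] A, ∃ D : A →ₗ[ℂ] X,
      (∀ x : A, ‖g x - σ x‖ ≤
        (1 / 2) * ∑' n : ℕ, φ ((2 ^ n : ℝ) • x) ((2 ^ n : ℝ) • x) 0) ∧
      (∀ x : A, ‖h x - τ x‖ ≤
        (1 / 2) * ∑' n : ℕ, φ ((2 ^ n : ℝ) • x) ((2 ^ n : ℝ) • x) 0) ∧
      (∀ x : A, ‖k x - ξ x‖ ≤
        (1 / 2) * ∑' n : ℕ, φ ((2 ^ n : ℝ) • x) ((2 ^ n : ℝ) • x) 0) ∧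
      (∀ x : A, ‖f x - D x‖ ≤
        (1 / 2) * ∑' n : ℕ, φ ((2 ^ n : ℝ) • x) ((2 ^ n : ℝ) • x) 0) ∧
      -- D is a Jordan Lie ternary (σ,τ,ξ)-derivation
      (∀ u : A, D (tA u u u) =
          twistedBracket mXAA mAAX (⇑σ) (⇑τ) (⇑ξ) (D u) u u
          - twistedBracket mXAA mAAX (⇑σ) (⇑τ) (⇑ξ) (D u) u u
          - twistedBracket mXAA mAAX (⇑σ) (⇑τ) (⇑ξ) (D u) u u) ∧
      -- uniqueness
      (∀ σ' : A →ₗ[ℂ] A, (∀ x : A, ‖g x - σ' x‖ ≤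
        (1 / 2) * ∑' n : ℕ, φ ((2 ^ n : ℝ) • x) ((2 ^ n : ℝ) • x) 0) → σ' = σ) ∧
      (∀ τ' : A →ₗ[ℂ] A, (∀ x : A, ‖h x - τ' x‖ ≤
        (1 / 2) * ∑' n : ℕ, φ ((2 ^ n : ℝ) • x) ((2 ^ n : ℝ) • x) 0) → τ' = τ) ∧
      (∀ ξ' : A →ₗ[ℂ] A, (∀ x : A, ‖k x - ξ' x‖ ≤
        (1 / 2) * ∑' n : ℕ, φ ((2 ^ n : ℝ) • x) ((2 ^ n : ℝ) • x) 0) → ξ' = ξ) ∧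
      (∀ D' : A →ₗ[ℂ] X, (∀ x : A, ‖f x - D' x‖ ≤
        (1 / 2) * ∑' n : ℕ, φ ((2 ^ n : ℝ) • x) ((2 ^ n : ℝ) • x) 0) → D' = D) := by
  classical
  have hψ0 : ∀ x y : A, 0 ≤ φ x y 0 := fun x y => hφnonneg x y 0
  have hψsum : ∀ x y : A, Summable fun n : ℕ => φ ((2 ^ n : ℝ) • x) ((2 ^ n : ℝ) • y) 0 := by
    intro x y
    have := hφsum x y 0
    simpa [smul_zero] using this
  obtain ⟨σ, hσtend, hσbound, hσuniq⟩ :=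
    hyers_ulam (fun x y => φ x y 0) hψ0 hψsum g hg0 hgineq
  obtain ⟨τ, hτtend, hτbound, hτuniq⟩ :=
    hyers_ulam (fun x y => φ x y 0) hψ0 hψsum h hh0 hhineq
  obtain ⟨ξ, hξtend, hξbound, hξuniq⟩ :=
    hyers_ulam (fun x y => φ x y 0) hψ0 hψsum k hk0 hkineq
  have hTB0 : twistedBracket mXAA mAAX g h k (f 0) 0 0 = 0 := by
    unfold twistedBracket
    rw [hf0, hg0, hh0, hk0, (hm1 0 0).map_zero, (hm9 0 0).map_zero, sub_zero]
  have hfineq' : ∀ lam : ℂ, ‖lam‖ = 1 → ∀ x y : A,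
      ‖f (lam • x + lam • y) - lam • f x - lam • f y‖ ≤ φ x y 0 := by
    intro lam hl x y
    have key := hfineq lam hl x y 0
    rw [(htA1 0 0).map_zero, add_zero, hTB0, sub_zero, add_zero, add_zero] at key
    exact key
  obtain ⟨D, hDtend, hDbound, hDuniq⟩ :=
    hyers_ulam (fun x y => φ x y 0) hψ0 hψsum f hf0 hfineq'
  refine ⟨σ, τ, ξ, D, hσbound, hτbound, hξbound, hDbound, ?_, hσuniq, hτuniq, hξuniq, hDuniq⟩
  -- the Jordan Lie ternary derivation identity
  intro u
  set t : A := tA u u u with ht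
  set cn : ℕ → A := fun n => (2 ^ n : ℝ) • u with hcn
  have h3n : Tendsto (fun n : ℕ => 3 * n) atTop atTop := by
    apply tendsto_atTop_atTop_of_monotone (fun a b hab => by omega)
    intro b; exact ⟨b, by omega⟩
  have hft : Tendsto (fun n : ℕ => (1 / 2 ^ (3 * n) : ℝ) • f ((2 ^ (3 * n) : ℝ) • t)) atTop
      (𝓝 (D t)) := (hDtend t).comp h3n
  have hfn : Tendsto (fun n : ℕ => (1 / 2 ^ n : ℝ) • f (cn n)) atTop (𝓝 (D u)) := hDtend u
  have hgn : Tendsto (fun n : ℕ => (1 / 2 ^ n : ℝ) • g (cn n)) atTop (𝓝 (σ u)) := hσtend u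
  have hhn : Tendsto (fun n : ℕ => (1 / 2 ^ n : ℝ) • h (cn n)) atTop (𝓝 (τ u)) := hτtend u
  have hkn : Tendsto (fun n : ℕ => (1 / 2 ^ n : ℝ) • k (cn n)) atTop (𝓝 (ξ u)) := hξtend u
  have hmX : ∀ (x : X) (a b : A), ‖mXAA x a b‖ ≤ ‖x‖ * ‖a‖ * ‖b‖ := by
    intro x a b
    calc ‖mXAA x a b‖ ≤ ‖a‖ * ‖b‖ * ‖x‖ :=
          le_trans (le_trans (le_max_left _ _) (le_max_left _ _)) (hmnorm x a b)
      _ = ‖x‖ * ‖a‖ * ‖b‖ := by ring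
  have hmA : ∀ (a b : A) (x : X), ‖mAAX a b x‖ ≤ ‖a‖ * ‖b‖ * ‖x‖ := by
    intro a b x
    exact le_trans (le_max_right _ _) (hmnorm x a b)
  have hP : Tendsto (fun n => mXAA ((1 / 2 ^ n : ℝ) • f (cn n)) ((1 / 2 ^ n : ℝ) • h (cn n))
      ((1 / 2 ^ n : ℝ) • k (cn n))) atTop (𝓝 (mXAA (D u) (τ u) (ξ u))) :=
    trilinear_tendsto mXAA (fun a b => hm1 a b) (fun x b => hm2 x b) (fun x a => hm3 x a)
      hmX hfn hhn hkn
  have hQ : Tendsto (fun n => mAAX ((1 / 2 ^ n : ℝ) • g (cn n)) ((1 / 2 ^ n : ℝ) • h (cn n))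
      ((1 / 2 ^ n : ℝ) • f (cn n))) atTop (𝓝 (mAAX (σ u) (τ u) (D u))) :=
    trilinear_tendsto mAAX (fun b x => hm7 b x) (fun a x => hm8 a x) (fun a b => hm9 a b)
      hmA hgn hhn hfn
  -- the scaled expression
  set S : ℕ → X := fun n => (1 / 2 ^ (3 * n) : ℝ) • (f (tA (cn n) (cn n) (cn n)) +
      (mXAA (f (cn n)) (h (cn n)) (k (cn n)) - mAAX (g (cn n)) (h (cn n)) (f (cn n)))) with hS
  have hφ0tend : Tendsto (fun n : ℕ => φ 0 0 ((2 ^ n : ℝ) • u)) atTop (𝓝 0) := by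
    have := (hφsum 0 0 u).tendsto_atTop_zero
    simpa [smul_zero] using this
  have hnle1 : ∀ n : ℕ, ‖(1 / 2 ^ n : ℝ)‖ ≤ 1 := by
    intro n
    rw [Real.norm_eq_abs, abs_of_pos (by positivity), div_le_one (by positivity)]
    exact one_le_pow₀ one_le_two
  have hSzero : Tendsto S atTop (𝓝 0) := by
    apply squeeze_zero_norm _ hφ0tend
    intro n
    have key := hfineq 1 (by simp) 0 0 (cn n)
    simp only [one_smul, smul_zero, zero_add, hf0, sub_zero] at key
    have e1 : f (tA (cn n) (cn n) (cn n)) - twistedBracket mXAA mAAX g h k (f (cn n)) (cn n) (cn n)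
        + twistedBracket mXAA mAAX g h k (f (cn n)) (cn n) (cn n)
        + twistedBracket mXAA mAAX g h k (f (cn n)) (cn n) (cn n)
        = f (tA (cn n) (cn n) (cn n)) + twistedBracket mXAA mAAX g h k (f (cn n)) (cn n) (cn n) := by
      abel
    rw [e1] at key
    rw [hS]
    dsimp only
    rw [norm_smul]
    calc ‖(1 / 2 ^ (3 * n) : ℝ)‖ * ‖_‖ ≤ 1 * φ 0 0 (cn n) :=
          mul_le_mul (hnle1 (3 * n)) (by exact key) (norm_nonneg _) one_pos.le
      _ = φ 0 0 ((2 ^ n : ℝ) • u) := by rw [one_mul]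
  have hpow3 : ∀ n : ℕ, ((2 : ℝ) ^ n) * (2 ^ n) * (2 ^ n) = 2 ^ (3 * n) := by
    intro n
    rw [← pow_add, ← pow_add]
    congr 1
    ring
  have hinv3 : ∀ n : ℕ, (1 / 2 ^ (3 * n) : ℝ) = (1 / 2 ^ n) * (1 / 2 ^ n) * (1 / 2 ^ n) := by
    intro n
    rw [div_mul_div_comm, div_mul_div_comm, one_mul, one_mul, hpow3]
  have hSeq : ∀ n, S n = (1 / 2 ^ (3 * n) : ℝ) • f ((2 ^ (3 * n) : ℝ) • t)
      + (mXAA ((1 / 2 ^ n : ℝ) • f (cn n)) ((1 / 2 ^ n : ℝ) • h (cn n)) ((1 / 2 ^ n : ℝ) • k (cn n))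
        - mAAX ((1 / 2 ^ n : ℝ) • g (cn n)) ((1 / 2 ^ n : ℝ) • h (cn n)) ((1 / 2 ^ n : ℝ) • f (cn n))) := by
    intro n
    have etA : tA (cn n) (cn n) (cn n) = (2 ^ (3 * n) : ℝ) • t := by
      rw [hcn]
      dsimp only
      rw [real_smul_clinear (htA1 _ _), real_smul_clinear (htA2 _ _),
        real_smul_clinear (htA3 _ _), ht, smul_smul, smul_smul, hpow3]
    have emX : (1 / 2 ^ (3 * n) : ℝ) • mXAA (f (cn n)) (h (cn n)) (k (cn n))
        = mXAA ((1 / 2 ^ n : ℝ) • f (cn n)) ((1 / 2 ^ n : ℝ) • h (cn n)) ((1 / 2 ^ n : ℝ) • k (cn n)) := by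
      rw [real_smul_clinear (hm1 _ _), real_smul_clinear (hm2 _ _),
        real_smul_clinear (hm3 _ _), smul_smul, smul_smul, hinv3]
    have emA : (1 / 2 ^ (3 * n) : ℝ) • mAAX (g (cn n)) (h (cn n)) (f (cn n))
        = mAAX ((1 / 2 ^ n : ℝ) • g (cn n)) ((1 / 2 ^ n : ℝ) • h (cn n)) ((1 / 2 ^ n : ℝ) • f (cn n)) := by
      rw [real_smul_clinear (hm7 _ _), real_smul_clinear (hm8 _ _),
        real_smul_clinear (hm9 _ _), smul_smul, smul_smul, hinv3]
    rw [hS]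
    dsimp only
    rw [etA, smul_add, smul_sub, emX, emA]
  have hSlim : Tendsto S atTop
      (𝓝 (D t + (mXAA (D u) (τ u) (ξ u) - mAAX (σ u) (τ u) (D u)))) := by
    rw [show S = fun n => (1 / 2 ^ (3 * n) : ℝ) • f ((2 ^ (3 * n) : ℝ) • t)
      + (mXAA ((1 / 2 ^ n : ℝ) • f (cn n)) ((1 / 2 ^ n : ℝ) • h (cn n)) ((1 / 2 ^ n : ℝ) • k (cn n))
        - mAAX ((1 / 2 ^ n : ℝ) • g (cn n)) ((1 / 2 ^ n : ℝ) • h (cn n)) ((1 / 2 ^ n : ℝ) • f (cn n)))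
      from funext hSeq]
    exact hft.add (hP.sub hQ)
  have hkey : D t + (mXAA (D u) (τ u) (ξ u) - mAAX (σ u) (τ u) (D u)) = 0 :=
    tendsto_nhds_unique hSlim hSzero
  have hgoal : D t = -(mXAA (D u) (τ u) (ξ u) - mAAX (σ u) (τ u) (D u)) := by
    exact eq_neg_of_add_eq_zero_left hkey
  show D t = _
  rw [hgoal]
  unfold twistedBracket
  abel
end

section
/- Let A be a complex normed space, X a complex Banach space, and 𝕋¹ = {λ ∈ ℂ : |λ| = 1}. Suppose f : A → X satisfies f(0) = 0 and φ : A×A → [0,∞) is a function such that φ̃(x,y) := (1/2) Σ_{n=0}^∞ φ(2ⁿx, 2ⁿy) < ∞ for all x,y ∈ A, and ‖f(λx + λy) − λf(x) − λf(y)‖ ≤ φ(x,y) for all λ ∈ 𝕋¹ and all x,y ∈ A. Then for every x ∈ A the sequence (f(2ⁿx)/2ⁿ)_n converges, the map D : A → X defined by D(x) := lim_{n→∞} f(2ⁿx)/2ⁿ is ℂ-linear, satisfies ‖f(x) − D(x)‖ ≤ φ̃(x,x) for all x ∈ A, and D is the unique ℂ-linear map satisfying this inequality. -/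
open Filter Topology

set_option maxHeartbeats 1600000

/-- Stability of the Cauchy functional equation with a general control function
(Gavruta-type stability, used in the proof of Theorem 2.1): the sequence
`f(2ⁿx)/2ⁿ` converges to a ℂ-linear map `D` with `‖f(x) − D(x)‖ ≤ φ̃(x,x)`, and `D`
is the unique ℂ-linear map satisfying this inequality. -/
theorem stability_cauchy_equation
    {A X : Type*}
    [NormedAddCommGroup A] [NormedSpace ℂ A]
    [NormedAddCommGroup X] [NormedSpace ℂ X] [CompleteSpace X]
    (f : A → X) (hf0 : f 0 = 0)
    (φ : A → A → ℝ) (hφnonneg : ∀ x y, 0 ≤ φ x y)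
    (hφsum : ∀ x y : A, Summable fun n : ℕ => φ ((2 ^ n : ℝ) • x) ((2 ^ n : ℝ) • y))
    (hfineq : ∀ lam : ℂ, ‖lam‖ = 1 → ∀ x y : A,
      ‖f (lam • x + lam • y) - lam • f x - lam • f y‖ ≤ φ x y) :
    ∃ D : A →ₗ[ℂ] X,
      (∀ x : A, Tendsto (fun n : ℕ => ((2 : ℝ) ^ n)⁻¹ • f ((2 ^ n : ℝ) • x))
        atTop (𝓝 (D x))) ∧
      (∀ x : A, ‖f x - D x‖ ≤
        (1 / 2) * ∑' n : ℕ, φ ((2 ^ n : ℝ) • x) ((2 ^ n : ℝ) • x)) ∧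
      (∀ D' : A →ₗ[ℂ] X, (∀ x : A, ‖f x - D' x‖ ≤
        (1 / 2) * ∑' n : ℕ, φ ((2 ^ n : ℝ) • x) ((2 ^ n : ℝ) • x)) → D' = D) := by
  classical
  set g : ℕ → A → X := fun n x => ((2 : ℝ) ^ n)⁻¹ • f ((2 ^ n : ℝ) • x) with hg
  have hadd : ∀ x y : A, ‖f (x + y) - f x - f y‖ ≤ φ x y := by
    intro x y
    have := hfineq 1 (by simp) x y
    simpa using this
  -- step estimate
  have hstep : ∀ (x : A) (n : ℕ),
      ‖g (n + 1) x - g n x‖ ≤ (1 / 2) * φ ((2 ^ n : ℝ) • x) ((2 ^ n : ℝ) • x) := by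
    intro x n
    have h1 : ((2 : ℝ) ^ (n + 1)) • x = (2 ^ n : ℝ) • x + (2 ^ n : ℝ) • x := by
      rw [← add_smul]; ring_nf
    have key : ((2 : ℝ) ^ (n + 1))⁻¹ + ((2 : ℝ) ^ (n + 1))⁻¹ = ((2 : ℝ) ^ n)⁻¹ := by
      rw [pow_succ]
      field_simp
      ring
    have h2 : g (n + 1) x - g n x
        = ((2 : ℝ) ^ (n + 1))⁻¹ • (f ((2 ^ n : ℝ) • x + (2 ^ n : ℝ) • x)
            - f ((2 ^ n : ℝ) • x) - f ((2 ^ n : ℝ) • x)) := by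
      simp only [hg, ← h1]
      rw [smul_sub, smul_sub, ← key, add_smul]
      abel
    rw [h2, norm_smul]
    have hpos : (0 : ℝ) < (2 : ℝ) ^ (n + 1) := by positivity
    have h3 : ‖((2 : ℝ) ^ (n + 1))⁻¹‖ = ((2 : ℝ) ^ (n + 1))⁻¹ := by
      rw [Real.norm_eq_abs, abs_of_pos (by positivity)]
    rw [h3]
    have h4 : ((2 : ℝ) ^ (n + 1))⁻¹ ≤ 1 / 2 := by
      rw [one_div]
      apply inv_anti₀ (by norm_num)
      calc (2 : ℝ) = 2 ^ 1 := (pow_one 2).symm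
        _ ≤ 2 ^ (n + 1) := by
            apply pow_le_pow_right₀ (by norm_num)
            omega
    calc ((2 : ℝ) ^ (n + 1))⁻¹ * ‖f ((2 ^ n : ℝ) • x + (2 ^ n : ℝ) • x)
            - f ((2 ^ n : ℝ) • x) - f ((2 ^ n : ℝ) • x)‖
        ≤ ((2 : ℝ) ^ (n + 1))⁻¹ * φ ((2 ^ n : ℝ) • x) ((2 ^ n : ℝ) • x) := by
          apply mul_le_mul_of_nonneg_left (hadd _ _) (by positivity)
      _ ≤ (1 / 2) * φ ((2 ^ n : ℝ) • x) ((2 ^ n : ℝ) • x) :=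
          mul_le_mul_of_nonneg_right h4 (hφnonneg _ _)
  have hd : ∀ x : A, ∀ n : ℕ, dist (g n x) (g (n + 1) x)
      ≤ (1 / 2) * φ ((2 ^ n : ℝ) • x) ((2 ^ n : ℝ) • x) := by
    intro x n
    rw [dist_eq_norm, norm_sub_rev]
    exact hstep x n
  have hsummable : ∀ x : A,
      Summable fun n : ℕ => (1 / 2) * φ ((2 ^ n : ℝ) • x) ((2 ^ n : ℝ) • x) :=
    fun x => (hφsum x x).mul_left _
  have hconv : ∀ x : A, ∃ l : X, Tendsto (fun n => g n x) atTop (𝓝 l) := by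
    intro x
    exact cauchySeq_tendsto_of_complete
      (cauchySeq_of_dist_le_of_summable _ (hd x) (hsummable x))
  set D₀ : A → X := fun x => (hconv x).choose with hD₀def
  have hD₀ : ∀ x : A, Tendsto (fun n => g n x) atTop (𝓝 (D₀ x)) :=
    fun x => (hconv x).choose_spec
  -- the norm bound
  have hbound : ∀ x : A, ‖f x - D₀ x‖ ≤
      (1 / 2) * ∑' n : ℕ, φ ((2 ^ n : ℝ) • x) ((2 ^ n : ℝ) • x) := by
    intro x
    have h := dist_le_tsum_of_dist_le_of_tendsto₀ _ (hd x) (hsummable x) (hD₀ x)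
    have hg0 : g 0 x = f x := by simp [hg]
    rw [hg0, dist_eq_norm] at h
    rwa [tsum_mul_left] at h
  -- additivity
  have hD_add : ∀ x y : A, D₀ (x + y) = D₀ x + D₀ y := by
    intro x y
    have hb : ∀ n : ℕ, ‖g n (x + y) - (g n x + g n y)‖
        ≤ φ ((2 ^ n : ℝ) • x) ((2 ^ n : ℝ) • y) := by
      intro n
      have harg : (2 ^ n : ℝ) • (x + y) = (2 ^ n : ℝ) • x + (2 ^ n : ℝ) • y :=
        smul_add _ _ _
      have h2 : g n (x + y) - (g n x + g n y)
          = ((2 : ℝ) ^ n)⁻¹ • (f ((2 ^ n : ℝ) • x + (2 ^ n : ℝ) • y)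
              - f ((2 ^ n : ℝ) • x) - f ((2 ^ n : ℝ) • y)) := by
        simp only [hg, harg, smul_sub]
        abel
      rw [h2, norm_smul, Real.norm_eq_abs, abs_of_pos (by positivity)]
      have h4 : ((2 : ℝ) ^ n)⁻¹ ≤ 1 := by
        apply inv_le_one_of_one_le₀
        exact one_le_pow₀ (by norm_num)
      calc ((2 : ℝ) ^ n)⁻¹ * ‖f ((2 ^ n : ℝ) • x + (2 ^ n : ℝ) • y)
              - f ((2 ^ n : ℝ) • x) - f ((2 ^ n : ℝ) • y)‖
          ≤ 1 * φ ((2 ^ n : ℝ) • x) ((2 ^ n : ℝ) • y) :=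
            mul_le_mul h4 (hadd _ _) (norm_nonneg _) zero_le_one
        _ = _ := one_mul _
    have hzero : Tendsto (fun n => g n (x + y) - (g n x + g n y)) atTop (𝓝 0) :=
      squeeze_zero_norm hb (hφsum x y).tendsto_atTop_zero
    have hlim : Tendsto (fun n => g n (x + y) - (g n x + g n y)) atTop
        (𝓝 (D₀ (x + y) - (D₀ x + D₀ y))) :=
      (hD₀ (x + y)).sub ((hD₀ x).add (hD₀ y))
    exact sub_eq_zero.mp (tendsto_nhds_unique hlim hzero)
  -- T¹-homogeneity
  have hT : ∀ lam : ℂ, ‖lam‖ = 1 → ∀ x : A, D₀ (lam • x) = lam • D₀ x := by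
    intro lam hl x
    have hb : ∀ n : ℕ, ‖g n (lam • x) - lam • g n x‖ ≤ φ ((2 ^ n : ℝ) • x) 0 := by
      intro n
      have h := hfineq lam hl ((2 ^ n : ℝ) • x) 0
      rw [smul_zero, add_zero, hf0, smul_zero, sub_zero] at h
      have harg : (2 ^ n : ℝ) • (lam • x) = lam • ((2 ^ n : ℝ) • x) :=
        smul_comm _ _ _
      have h2 : g n (lam • x) - lam • g n x
          = ((2 : ℝ) ^ n)⁻¹ • (f (lam • ((2 ^ n : ℝ) • x))
              - lam • f ((2 ^ n : ℝ) • x)) := by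
        simp only [hg, harg, smul_sub]
        rw [smul_comm lam (((2 : ℝ) ^ n)⁻¹) (f ((2 ^ n : ℝ) • x))]
      rw [h2, norm_smul, Real.norm_eq_abs, abs_of_pos (by positivity)]
      have h4 : ((2 : ℝ) ^ n)⁻¹ ≤ 1 := by
        apply inv_le_one_of_one_le₀
        exact one_le_pow₀ (by norm_num)
      calc ((2 : ℝ) ^ n)⁻¹ * ‖f (lam • ((2 ^ n : ℝ) • x)) - lam • f ((2 ^ n : ℝ) • x)‖
          ≤ 1 * φ ((2 ^ n : ℝ) • x) 0 :=
            mul_le_mul h4 h (norm_nonneg _) zero_le_one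
        _ = _ := one_mul _
    have hzero : Tendsto (fun n => g n (lam • x) - lam • g n x) atTop (𝓝 0) :=
      squeeze_zero_norm hb (by simpa using (hφsum x 0).tendsto_atTop_zero)
    have hlim : Tendsto (fun n => g n (lam • x) - lam • g n x) atTop
        (𝓝 (D₀ (lam • x) - lam • D₀ x)) :=
      (hD₀ (lam • x)).sub ((hD₀ x).const_smul lam)
    exact sub_eq_zero.mp (tendsto_nhds_unique hlim hzero)
  -- additive homomorphism
  set Dhom : A →+ X := AddMonoidHom.mk' D₀ hD_add with hDhom
  have hnat : ∀ (n : ℕ) (y : A), D₀ ((n : ℂ) • y) = (n : ℂ) • D₀ y := by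
    intro n y
    show Dhom ((n : ℂ) • y) = (n : ℂ) • Dhom y
    rw [Nat.cast_smul_eq_nsmul, Nat.cast_smul_eq_nsmul]
    exact map_nsmul Dhom n y
  have htwo : Function.Injective (fun v : X => (2 : ℂ) • v) :=
    smul_right_injective X two_ne_zero
  -- homogeneity for real t in [0,1]
  have hreal01 : ∀ t : ℝ, 0 ≤ t → t ≤ 1 → ∀ x : A,
      D₀ ((t : ℂ) • x) = (t : ℂ) • D₀ x := by
    intro t ht0 ht1 x
    set s : ℝ := Real.sqrt (1 - t ^ 2) with hs
    set lam : ℂ := ⟨t, s⟩ with hlam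
    have hs2 : s * s = 1 - t ^ 2 := Real.mul_self_sqrt (by nlinarith)
    have habs : ‖lam‖ = 1 := by
      rw [Complex.norm_def, Complex.normSq_mk]
      have : t * t + s * s = 1 := by nlinarith
      rw [this, Real.sqrt_one]
    have habs' : ‖starRingEnd ℂ lam‖ = 1 := by
      rw [Complex.norm_conj]; exact habs
    have hsum : lam + starRingEnd ℂ lam = (2 : ℂ) * (t : ℂ) := by
      apply Complex.ext <;> simp [hlam] <;> ring
    have e1 : D₀ ((lam + starRingEnd ℂ lam) • x)
        = (lam + starRingEnd ℂ lam) • D₀ x := by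
      rw [add_smul, hD_add, hT lam habs, hT _ habs', ← add_smul]
    rw [hsum, mul_smul, mul_smul] at e1
    have e2 : D₀ ((2 : ℂ) • ((t : ℂ) • x)) = (2 : ℂ) • D₀ ((t : ℂ) • x) := by
      have h2 : ((2 : ℕ) : ℂ) = (2 : ℂ) := by norm_num
      rw [← h2, hnat]
    rw [e2] at e1
    exact htwo e1
  -- homogeneity for all nonneg real t
  have hrealpos : ∀ t : ℝ, 0 ≤ t → ∀ x : A,
      D₀ ((t : ℂ) • x) = (t : ℂ) • D₀ x := by
    intro t ht x
    set n : ℕ := ⌈t⌉₊ + 1 with hn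
    have hnt : t ≤ (n : ℝ) := le_trans (Nat.le_ceil t) (by exact_mod_cast Nat.le_succ _)
    have hnpos : (0 : ℝ) < (n : ℝ) := by positivity
    have h01 : 0 ≤ t / n ∧ t / n ≤ 1 := by
      constructor
      · positivity
      · rw [div_le_one hnpos]; exact hnt
    have hc : (t : ℂ) = (n : ℂ) * ((t / n : ℝ) : ℂ) := by
      have hne : (n : ℂ) ≠ 0 := by exact_mod_cast hnpos.ne'
      push_cast
      field_simp
    rw [hc, mul_smul, hnat, hreal01 _ h01.1 h01.2, ← mul_smul]
  -- full ℂ-homogeneity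
  have hC : ∀ (c : ℂ) (x : A), D₀ (c • x) = c • D₀ x := by
    intro c x
    rcases eq_or_ne c 0 with hc | hc
    · subst hc
      simp only [zero_smul]
      exact map_zero Dhom
    · set r : ℝ := ‖c‖ with hr
      have hrpos : 0 < r := norm_pos_iff.mpr hc
      set lam : ℂ := c / (r : ℂ) with hlam
      have habs : ‖lam‖ = 1 := by
        rw [hlam, norm_div, Complex.norm_of_nonneg hrpos.le, div_self hrpos.ne']
      have hdec : c = (r : ℂ) • lam := by
        have hne : (r : ℂ) ≠ 0 := by exact_mod_cast hrpos.ne'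
        rw [hlam, smul_eq_mul]
        field_simp
      calc D₀ (c • x) = D₀ ((r : ℂ) • (lam • x)) := by
            rw [← smul_assoc, ← hdec]
        _ = (r : ℂ) • D₀ (lam • x) := hrealpos r hrpos.le _
        _ = (r : ℂ) • (lam • D₀ x) := by rw [hT lam habs]
        _ = c • D₀ x := by rw [← smul_assoc, ← hdec]
  refine ⟨{ toFun := D₀, map_add' := hD_add, map_smul' := hC }, hD₀, hbound, ?_⟩
  -- uniqueness
  intro D' hD'
  ext x
  show D' x = D₀ x
  have htail : Tendsto (fun n : ℕ => ∑' k : ℕ,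
      φ ((2 ^ (k + n) : ℝ) • x) ((2 ^ (k + n) : ℝ) • x)) atTop (𝓝 0) :=
    tendsto_sum_nat_add fun m : ℕ => φ ((2 ^ m : ℝ) • x) ((2 ^ m : ℝ) • x)
  have key : ∀ n : ℕ, ‖D₀ x - D' x‖ ≤ ∑' k : ℕ,
      φ ((2 ^ (k + n) : ℝ) • x) ((2 ^ (k + n) : ℝ) • x) := by
    intro n
    set y : A := (2 ^ n : ℝ) • x with hy
    have hcoe : ((((2 : ℝ) ^ n : ℝ)) : ℂ) • x = (2 ^ n : ℝ) • x := Complex.coe_smul _ _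
    have hD₀y : D₀ y = (2 ^ n : ℝ) • D₀ x := by
      rw [hy, ← hcoe, hC, Complex.coe_smul]
    have hD'y : D' y = (2 ^ n : ℝ) • D' x := by
      rw [hy, ← hcoe, map_smul, Complex.coe_smul]
    have hdiff : D₀ y - D' y = (2 ^ n : ℝ) • (D₀ x - D' x) := by
      rw [hD₀y, hD'y, smul_sub]
    have hnorm : ‖D₀ y - D' y‖ = (2 : ℝ) ^ n * ‖D₀ x - D' x‖ := by
      rw [hdiff, norm_smul, Real.norm_eq_abs, abs_of_pos (by positivity)]
    have htri : ‖D₀ y - D' y‖ ≤ ‖f y - D' y‖ + ‖f y - D₀ y‖ := by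
      have : D₀ y - D' y = (f y - D' y) - (f y - D₀ y) := by abel
      rw [this]
      exact norm_sub_le _ _
    have hS : ∀ k : ℕ, (2 ^ k : ℝ) • y = (2 ^ (k + n) : ℝ) • x := by
      intro k
      rw [hy, smul_smul, ← pow_add]
    have hsum_eq : (∑' k : ℕ, φ ((2 ^ k : ℝ) • y) ((2 ^ k : ℝ) • y))
        = ∑' k : ℕ, φ ((2 ^ (k + n) : ℝ) • x) ((2 ^ (k + n) : ℝ) • x) := by
      apply tsum_congr
      intro k
      rw [hS k]
    have hb1 := hbound y
    have hb2 := hD' y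
    have hSnonneg : 0 ≤ ∑' k : ℕ,
        φ ((2 ^ (k + n) : ℝ) • x) ((2 ^ (k + n) : ℝ) • x) :=
      tsum_nonneg fun k => hφnonneg _ _
    have hfull : ‖D₀ x - D' x‖ ≤ ((2 : ℝ) ^ n)⁻¹ * ∑' k : ℕ,
        φ ((2 ^ (k + n) : ℝ) • x) ((2 ^ (k + n) : ℝ) • x) := by
      have hpow : (0 : ℝ) < (2 : ℝ) ^ n := by positivity
      rw [← hsum_eq]
      have : ‖D₀ y - D' y‖ ≤ ∑' k : ℕ, φ ((2 ^ k : ℝ) • y) ((2 ^ k : ℝ) • y) := by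
        calc ‖D₀ y - D' y‖ ≤ ‖f y - D' y‖ + ‖f y - D₀ y‖ := htri
          _ ≤ (1 / 2) * (∑' k : ℕ, φ ((2 ^ k : ℝ) • y) ((2 ^ k : ℝ) • y))
              + (1 / 2) * (∑' k : ℕ, φ ((2 ^ k : ℝ) • y) ((2 ^ k : ℝ) • y)) :=
            add_le_add hb2 hb1
          _ = _ := by ring
      rw [hnorm] at this
      rw [le_inv_mul_iff₀ hpow]
      exact this
    have hle1 : ((2 : ℝ) ^ n)⁻¹ ≤ 1 := by
      apply inv_le_one_of_one_le₀
      exact one_le_pow₀ (by norm_num)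
    calc ‖D₀ x - D' x‖ ≤ ((2 : ℝ) ^ n)⁻¹ * ∑' k : ℕ,
          φ ((2 ^ (k + n) : ℝ) • x) ((2 ^ (k + n) : ℝ) • x) := hfull
      _ ≤ 1 * ∑' k : ℕ, φ ((2 ^ (k + n) : ℝ) • x) ((2 ^ (k + n) : ℝ) • x) :=
          mul_le_mul_of_nonneg_right hle1 hSnonneg
      _ = _ := one_mul _
  have hle0 : ‖D₀ x - D' x‖ ≤ 0 := ge_of_tendsto' htail key
  have : D₀ x - D' x = 0 := by
    have := le_antisymm hle0 (norm_nonneg _)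
    exact norm_eq_zero.mp this
  exact (sub_eq_zero.mp this).symm
end
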